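/- arXiv:2208.10055 — 5 statements merged into one kernel-verified Lean document; each statement's English description precedes it below -/
import Mathlib

section
/- Let f: ℝ^m → ℝ^n be a polynomial map and γ: [0,1] → ℝ^n an embedding such that the restriction f: f^{-1}(γ((0,1])) → γ((0,1]) is a locally trivial fibration. Let g: S^i × (0,1] → f^{-1}(γ((0,1])) be a trivial emerging i-cycle, with triviality witnessed by ε > 0 and a continuous fibered map ḡ: S^i × [0,ε] → f^{-1}(γ([0,ε])) (f(ḡ(x,s)) = γ(s)) such that g_s := g(·,s) and ḡ_s := ḡ(·,s) are homotopic in f^{-1}(γ(s)) for each s ∈ (0,ε]. Then there exist a real number ε' with 0 < ε' < ε and a continuous fibered map g̃: S^i × [0,1] → f^{-1}(γ([0,1])) (f(g̃(x,s)) = γ(s)) such that g̃(·,s) = ḡ(·,s) for all s ∈ [0,ε'] and g̃(·,s) = g(·,s) for all s ∈ [ε,1]. -/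
open scoped unitInterval
open Set Filter Topology Metric

noncomputable section

/-! ### Cubes and relative homotopy groups -/

/-- The `n`-dimensional unit cube `I^n = [0,1]^n`. -/
abbrev Cube (n : ℕ) := Fin n → I

/-- The subset `J_{i+1} = ∂ I^{i+1} ∖ (Int I^i × {0})` of the cube `I^{i+1}`;
the last coordinate plays the role of the distinguished (base-face) coordinate. -/
def JSet (i : ℕ) : Set (Cube (i + 1)) :=
  {p | (∃ j, p j = 0 ∨ p j = 1) ∧
    ¬(p (Fin.last i) = 0 ∧ ∀ j : Fin i, p j.castSucc ≠ 0 ∧ p j.castSucc ≠ 1)}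

/-- A continuous map `h : I^{i+1} → A` with `h(I^i × {0}) ⊆ B` and `h(J_{i+1}) = {x0}`,
i.e. the maps representing elements of the relative homotopy group `π_{i+1}(A, B, x0)`. -/
structure IsRelMap {X : Type*} [TopologicalSpace X] (i : ℕ) (A B : Set X) (x0 : X)
    (h : Cube (i + 1) → X) : Prop where
  continuous : Continuous h
  mem_total : ∀ p, h p ∈ A
  mem_base : ∀ p : Cube (i + 1), p (Fin.last i) = 0 → h p ∈ B
  eq_base_pt : ∀ p ∈ JSet i, h p = x0

/-- Homotopy of two representing maps through maps of the same form. -/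
def RelHomotopic {X : Type*} [TopologicalSpace X] (i : ℕ) (A B : Set X) (x0 : X)
    (h₀ h₁ : Cube (i + 1) → X) : Prop :=
  ∃ H : Cube (i + 1) × I → X, Continuous H ∧
    (∀ τ : I, IsRelMap i A B x0 fun p => H (p, τ)) ∧
    (∀ p, H (p, 0) = h₀ p) ∧ ∀ p, H (p, 1) = h₁ p

/-- `π_{i+1}(A, B, x0) = 1`: every representing map is homotopic, through maps of the same
form, to a map with image contained in `B`. -/
def RelPiTrivial {X : Type*} [TopologicalSpace X] (i : ℕ) (A B : Set X) (x0 : X) : Prop :=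
  ∀ h : Cube (i + 1) → X, IsRelMap i A B x0 h →
    ∃ h' : Cube (i + 1) → X, IsRelMap i A B x0 h' ∧ (∀ p, h' p ∈ B) ∧
      RelHomotopic i A B x0 h h'

/-- The set of homotopy classes forming the relative homotopy group `π_{i+1}(A, B, x0)`. -/
def RelPi {X : Type*} [TopologicalSpace X] (i : ℕ) (A B : Set X) (x0 : X) : Type _ :=
  Quot fun h₁ h₂ : {h : Cube (i + 1) → X // IsRelMap i A B x0 h} =>
    RelHomotopic i A B x0 h₁.1 h₂.1

theorem IsRelMap.mono {X : Type*} [TopologicalSpace X] {i : ℕ} {A A' B B' : Set X} {x0 : X}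
    {h : Cube (i + 1) → X} (hh : IsRelMap i A B x0 h) (hA : A ⊆ A') (hB : B ⊆ B') :
    IsRelMap i A' B' x0 h :=
  ⟨hh.continuous, fun p => hA (hh.mem_total p), fun p hp => hB (hh.mem_base p hp),
    hh.eq_base_pt⟩

theorem RelHomotopic.mono {X : Type*} [TopologicalSpace X] {i : ℕ} {A A' B B' : Set X}
    {x0 : X} {h₀ h₁ : Cube (i + 1) → X} (hr : RelHomotopic i A B x0 h₀ h₁)
    (hA : A ⊆ A') (hB : B ⊆ B') : RelHomotopic i A' B' x0 h₀ h₁ := by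
  obtain ⟨H, hc, hsl, h0, h1⟩ := hr
  exact ⟨H, hc, fun τ => (hsl τ).mono hA hB, h0, h1⟩

/-- The map of relative homotopy groups induced by an inclusion of pairs `(A,B) ⊆ (A',B')`. -/
def RelPi.incl {X : Type*} [TopologicalSpace X] {i : ℕ} {A A' B B' : Set X} {x0 : X}
    (hA : A ⊆ A') (hB : B ⊆ B') : RelPi i A B x0 → RelPi i A' B' x0 :=
  Quot.map (fun h => ⟨h.1, h.2.mono hA hB⟩) fun _ _ hr => hr.mono hA hB

/-! ### Serre fibrations, locally trivial fibrations, s-arcs -/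

/-- A continuous surjection `p : E → B` is a Serre fibration if it has the homotopy lifting
property with respect to all finite-dimensional cubes. -/
def IsSerreFibration {E B : Type*} [TopologicalSpace E] [TopologicalSpace B]
    (p : E → B) : Prop :=
  Continuous p ∧ Function.Surjective p ∧
    ∀ (k : ℕ) (H : Cube k × I → B) (h : Cube k → E),
      Continuous H → Continuous h → (∀ q, p (h q) = H (q, 0)) →
      ∃ G : Cube k × I → E, Continuous G ∧ (∀ q, p (G q) = H q) ∧ ∀ q, G (q, 0) = h q

/-- `f` is a locally trivial fibration over `S`: every `t ∈ S` has a neighborhood `V ∩ S`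
in `S` such that `f ⁻¹' (V ∩ S)` is homeomorphic to `(V ∩ S) × f ⁻¹' {t}` over `f`. -/
def IsLocTrivOn {E B : Type*} [TopologicalSpace E] [TopologicalSpace B]
    (f : E → B) (S : Set B) : Prop :=
  ∀ t ∈ S, ∃ V : Set B, IsOpen V ∧ t ∈ V ∧
    ∃ φ : ↥(f ⁻¹' (V ∩ S)) ≃ₜ ↥(V ∩ S) × ↥(f ⁻¹' {t}), ∀ x, ((φ x).1 : B) = f (x : E)

/-- `δ` is an s-arc on `S` at `t0`: the image of an embedding `γ : [0,1] → B` with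
`γ 0 = t0` and `γ((0,1]) ⊆ S`. -/
def IsSArc {B : Type*} [TopologicalSpace B] (S : Set B) (t0 : B) (δ : Set B) : Prop :=
  ∃ γ : I → B, Continuous γ ∧ Function.Injective γ ∧ γ 0 = t0 ∧
    (∀ s : I, s ≠ 0 → γ s ∈ S) ∧ δ = Set.range γ

/-- `f` has no vanishing component at `t0`: for every embedded arc `γ` starting at `t0`
over whose image minus `t0` the map `f` is a locally trivial fibration, every connected
component of `f ⁻¹' (γ((0,1]))` has closure meeting the fiber `f ⁻¹' {t0}`. -/
def NoVanishingComponent {E B : Type*} [TopologicalSpace E] [TopologicalSpace B]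
    (f : E → B) (t0 : B) : Prop :=
  ∀ γ : I → B, Continuous γ → Function.Injective γ → γ 0 = t0 →
    IsLocTrivOn f (γ '' {s : I | s ≠ 0}) →
    ∀ x ∈ f ⁻¹' (γ '' {s : I | s ≠ 0}),
      (closure (connectedComponentIn (f ⁻¹' (γ '' {s : I | s ≠ 0})) x) ∩
        f ⁻¹' {t0}).Nonempty

/-! ### Polynomial maps and semialgebraic sets -/

/-- A polynomial map `ℝ^m → ℝ^n`: each component is (the evaluation of) a real
polynomial in `m` variables. -/
def IsPolyMap {m n : ℕ} (f : EuclideanSpace ℝ (Fin m) → EuclideanSpace ℝ (Fin n)) : Prop :=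
  ∀ j : Fin n, ∃ P : MvPolynomial (Fin m) ℝ, ∀ x, f x j = MvPolynomial.eval (fun k => x k) P

/-- Semialgebraic subsets of `ℝ^n`. -/
inductive IsSemialgebraic {n : ℕ} : Set (EuclideanSpace ℝ (Fin n)) → Prop
  | zeroSet (P : MvPolynomial (Fin n) ℝ) :
      IsSemialgebraic {x | MvPolynomial.eval (fun j => x j) P = 0}
  | posSet (P : MvPolynomial (Fin n) ℝ) :
      IsSemialgebraic {x | 0 < MvPolynomial.eval (fun j => x j) P}
  | union {s t : Set (EuclideanSpace ℝ (Fin n))} :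
      IsSemialgebraic s → IsSemialgebraic t → IsSemialgebraic (s ∪ t)
  | inter {s t : Set (EuclideanSpace ℝ (Fin n))} :
      IsSemialgebraic s → IsSemialgebraic t → IsSemialgebraic (s ∩ t)
  | compl {s : Set (EuclideanSpace ℝ (Fin n))} :
      IsSemialgebraic s → IsSemialgebraic sᶜ

/-! ### Spheres, vanishing and emerging cycles -/

/-- The `i`-dimensional sphere, realized as the unit sphere in `ℝ^{i+1}`. -/
def SphS (i : ℕ) : Set (EuclideanSpace ℝ (Fin (i + 1))) := Metric.sphere 0 1

/-- The base point of the `i`-dimensional sphere. -/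
def spherePt (i : ℕ) : ↥(SphS i) := ⟨EuclideanSpace.single 0 1, by simp [SphS]⟩

/-- A map `h : Z → E` is null-homotopic in `A ⊆ E` (its image being contained in `A`)
if it is homotopic within `A` to a constant map. -/
def NullHomotopicIn {Z E : Type*} [TopologicalSpace Z] [TopologicalSpace E]
    (h : Z → E) (A : Set E) : Prop :=
  ∃ (H : Z × I → E) (c : E), Continuous H ∧ (∀ q, H q ∈ A) ∧
    (∀ z, H (z, 0) = h z) ∧ ∀ z, H (z, 1) = c

/-- Two maps `h₀ h₁ : Z → E` are (freely) homotopic in `A ⊆ E`. -/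
def HomotopicIn {Z E : Type*} [TopologicalSpace Z] [TopologicalSpace E]
    (h₀ h₁ : Z → E) (A : Set E) : Prop :=
  ∃ H : Z × I → E, Continuous H ∧ (∀ q, H q ∈ A) ∧
    (∀ z, H (z, 0) = h₀ z) ∧ ∀ z, H (z, 1) = h₁ z

/-- Two maps `h₀ h₁ : Z → E` are homotopic in `A ⊆ E` relative to the base point `z0`. -/
def HomotopicInRel {Z E : Type*} [TopologicalSpace Z] [TopologicalSpace E]
    (h₀ h₁ : Z → E) (A : Set E) (z0 : Z) : Prop :=
  ∃ H : Z × I → E, Continuous H ∧ (∀ q, H q ∈ A) ∧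
    (∀ z, H (z, 0) = h₀ z) ∧ (∀ z, H (z, 1) = h₁ z) ∧ ∀ τ, H (z0, τ) = h₀ z0

/-- A vanishing `i`-cycle of `f` over the parametrized arc `γ`: a fibered map
`g : S^i × [0,1] → E` over `γ` such that `g(·,s)` is null-homotopic in the fiber
`f ⁻¹' {γ s}` for every `s > 0`. -/
def IsVanishingCycle {E B : Type*} [TopologicalSpace E] [TopologicalSpace B]
    (f : E → B) (γ : I → B) (i : ℕ) (g : ↥(SphS i) × I → E) : Prop :=
  Continuous g ∧ (∀ x s, f (g (x, s)) = γ s) ∧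
    ∀ s : I, s ≠ 0 → NullHomotopicIn (fun x => g (x, s)) (f ⁻¹' {γ s})

/-- A vanishing cycle is trivial if `g(·,0)` is also null-homotopic in `f ⁻¹' {γ 0}`. -/
def VanishingCycleTrivial {E B : Type*} [TopologicalSpace E] [TopologicalSpace B]
    (f : E → B) (γ : I → B) (i : ℕ) (g : ↥(SphS i) × I → E) : Prop :=
  NullHomotopicIn (fun x => g (x, 0)) (f ⁻¹' {γ 0})

/-- An emerging `i`-cycle of `f` over the parametrized arc `γ`: a fibered map
`g : S^i × (0,1] → E` over `γ` such that the base point image `g(x₀,s)` has a limit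
as `s → 0`. -/
def IsEmergingCycle {E B : Type*} [TopologicalSpace E] [TopologicalSpace B]
    (f : E → B) (γ : I → B) (i : ℕ) (g : ↥(SphS i) × {s : I // s ≠ 0} → E) : Prop :=
  Continuous g ∧ (∀ x s, f (g (x, s)) = γ s.1) ∧
    ∃ L : E, Filter.Tendsto (fun s : {s : I // s ≠ 0} => g (spherePt i, s))
      (Filter.comap Subtype.val (𝓝[≠] (0 : I))) (𝓝 L)

/-- An emerging cycle is trivial if it agrees near `0`, up to fiberwise base-point
preserving homotopy, with a fibered map defined on `S^i × [0,ε)`. -/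
def EmergingCycleTrivial {E B : Type*} [TopologicalSpace E] [TopologicalSpace B]
    (f : E → B) (γ : I → B) (i : ℕ) (g : ↥(SphS i) × {s : I // s ≠ 0} → E) : Prop :=
  ∃ ε : I, ε ≠ 0 ∧ ∃ g' : ↥(SphS i) × {s : I // (s : ℝ) < (ε : ℝ)} → E,
    Continuous g' ∧ (∀ x s, f (g' (x, s)) = γ s.1) ∧
      ∀ (s : {s : I // s ≠ 0}) (hs : ((s : I) : ℝ) < (ε : ℝ)),
        g' (spherePt i, ⟨s.1, hs⟩) = g (spherePt i, s) ∧
        HomotopicInRel (fun x => g (x, s)) (fun x => g' (x, ⟨s.1, hs⟩))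
          (f ⁻¹' {γ s.1}) (spherePt i)

/-! ### Auxiliary lemmas for the proof -/

theorem myContinuousOn_union_closed {α β : Type*} [TopologicalSpace α] [TopologicalSpace β]
    {h : α → β} {s t : Set α} (hs : IsClosed s) (ht : IsClosed t)
    (hfs : ContinuousOn h s) (hft : ContinuousOn h t) : ContinuousOn h (s ∪ t) := by
  intro x hx
  have hws : ContinuousWithinAt h s x := by
    rcases em (x ∈ s) with hxs | hxs
    · exact hfs x hxs
    · exact continuousWithinAt_of_notMem_closure (by rwa [hs.closure_eq])
  have hwt : ContinuousWithinAt h t x := by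
    rcases em (x ∈ t) with hxt | hxt
    · exact hft x hxt
    · exact continuousWithinAt_of_notMem_closure (by rwa [ht.closure_eq])
  exact (hws.union hwt).mono (subset_refl _)

variable {E B : Type*} [TopologicalSpace E] [TopologicalSpace B] [T2Space B]

/-- A trivialization-with-retraction of `f` over the arc segment `γ '' Icc a b`,
with fiber `F`. -/
def ArcTriv (f : E → B) (γ : I → B) (a b : I) (F : Set E) : Prop :=
  IsClosed F ∧ ∃ (q : E → E) (r : I × E → E),
    ContinuousOn q (f ⁻¹' (γ '' Icc a b)) ∧
    (∀ x ∈ f ⁻¹' (γ '' Icc a b), q x ∈ F) ∧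
    ContinuousOn r (Icc a b ×ˢ F) ∧
    (∀ t ∈ Icc a b, ∀ v ∈ F, f (r (t, v)) = γ t) ∧
    (∀ t ∈ Icc a b, ∀ x : E, f x = γ t → r (t, q x) = x) ∧
    (∀ t ∈ Icc a b, ∀ v ∈ F, q (r (t, v)) = v)

theorem unitInterval_pos_of_ne_zero {a : I} (ha : a ≠ 0) : (0:ℝ) < a := by
  rcases lt_or_eq_of_le a.2.1 with h | h
  · exact h
  · exact absurd (Subtype.ext h.symm) ha

theorem arcTriv_local {f : E → B} {γ : I → B} (hfc : Continuous f) (hγc : Continuous γ)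
    (hlt : IsLocTrivOn f (γ '' {s : I | s ≠ 0})) (t : I) (ht : t ≠ 0) :
    ∃ η > (0:ℝ), ∃ F : Set E, ∀ a b : I, a ≠ 0 → a ≤ b →
      |(a:ℝ) - t| < η → |(b:ℝ) - t| < η → ArcTriv f γ a b F := by
  set S := γ '' {s : I | s ≠ 0} with hS
  obtain ⟨V, hVo, htV, φ, hφ⟩ := hlt (γ t) ⟨t, ht, rfl⟩
  have hUo : IsOpen (γ ⁻¹' V) := hVo.preimage hγc
  obtain ⟨η, hη, hball⟩ := Metric.isOpen_iff.1 hUo t htV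
  refine ⟨η, hη, f ⁻¹' {γ t}, fun a b ha hab haη hbη => ?_⟩
  -- all points of `Icc a b` are mapped by `γ` into `V ∩ S`
  have hmemVS : ∀ s : I, s ∈ Icc a b → γ s ∈ V ∩ S := by
    intro s hs
    constructor
    · apply hball
      rw [Metric.mem_ball, Subtype.dist_eq, Real.dist_eq, abs_sub_lt_iff]
      constructor
      · calc (s:ℝ) - t ≤ (b:ℝ) - t := by
              have : (s:ℝ) ≤ (b:ℝ) := hs.2; linarith
          _ ≤ |(b:ℝ) - t| := le_abs_self _
          _ < η := hbη
      · calc (t:ℝ) - s ≤ (t:ℝ) - a := by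
              have : (a:ℝ) ≤ (s:ℝ) := hs.1; linarith
          _ ≤ |(a:ℝ) - t| := by rw [abs_sub_comm]; exact le_abs_self _
          _ < η := haη
    · refine ⟨s, ?_, rfl⟩
      intro h0
      have : (0:ℝ) < a := unitInterval_pos_of_ne_zero ha
      have : (0:ℝ) < (s:ℝ) := lt_of_lt_of_le this hs.1
      rw [h0] at this; simp at this
  have hsub : f ⁻¹' (γ '' Icc a b) ⊆ f ⁻¹' (V ∩ S) := by
    intro x hx
    obtain ⟨s, hs, hsx⟩ := hx
    show f x ∈ V ∩ S
    rw [← hsx]; exact hmemVS s hs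
  classical
  set q : E → E := fun x => if h : x ∈ f ⁻¹' (V ∩ S) then ((φ ⟨x, h⟩).2 : E) else x with hq
  set r : I × E → E := fun p =>
    if h : γ p.1 ∈ V ∩ S ∧ p.2 ∈ f ⁻¹' {γ t} then
      (φ.symm (⟨γ p.1, h.1⟩, ⟨p.2, h.2⟩) : E) else p.2 with hr
  have hqx : ∀ (x : E) (h : x ∈ f ⁻¹' (V ∩ S)), q x = ((φ ⟨x, h⟩).2 : E) := by
    intro x h; simp only [hq, dif_pos h]
  have hrp : ∀ (s : I) (v : E) (h1 : γ s ∈ V ∩ S) (h2 : v ∈ f ⁻¹' {γ t}),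
      r (s, v) = (φ.symm (⟨γ s, h1⟩, ⟨v, h2⟩) : E) := by
    intro s v h1 h2; simp only [hr, dif_pos (⟨h1, h2⟩ : _ ∧ _)]
  refine ⟨isClosed_singleton.preimage hfc, q, r, ?_, ?_, ?_, ?_, ?_, ?_⟩
  · -- continuity of q
    apply ContinuousOn.mono (s := f ⁻¹' (V ∩ S)) _ hsub
    rw [continuousOn_iff_continuous_restrict]
    have : Continuous fun x : ↥(f ⁻¹' (V ∩ S)) => ((φ x).2 : E) :=
      continuous_subtype_val.comp (continuous_snd.comp φ.continuous)
    refine this.congr fun x => ?_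
    show ((φ x).2 : E) = q x.1
    rw [hqx x.1 x.2]
  · intro x hx
    have h := hsub hx
    rw [hqx x h]
    exact (φ ⟨x, h⟩).2.2
  · -- continuity of r
    rw [continuousOn_iff_continuous_restrict]
    have hc : Continuous fun p : ↥(Icc a b ×ˢ (f ⁻¹' {γ t})) =>
        (φ.symm (⟨γ p.1.1, hmemVS p.1.1 p.2.1⟩, ⟨p.1.2, p.2.2⟩) : E) := by
      apply continuous_subtype_val.comp
      apply φ.symm.continuous.comp
      apply Continuous.prodMk
      · exact Continuous.subtype_mk (hγc.comp (continuous_fst.comp continuous_subtype_val)) _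
      · exact Continuous.subtype_mk (continuous_snd.comp continuous_subtype_val) _
    refine hc.congr fun p => ?_
    show _ = r p.1
    rw [hrp p.1.1 p.1.2 (hmemVS p.1.1 p.2.1) p.2.2]
  · -- fiber
    intro s hs v hv
    rw [hrp s v (hmemVS s hs) hv, ← hφ]
    rw [Homeomorph.apply_symm_apply]
  · -- compat
    intro s hs x hfx
    have hxV : x ∈ f ⁻¹' (V ∩ S) := by show f x ∈ V ∩ S; rw [hfx]; exact hmemVS s hs
    rw [hqx x hxV]
    have h2 : ((φ ⟨x, hxV⟩).2 : E) ∈ f ⁻¹' {γ t} := (φ ⟨x, hxV⟩).2.2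
    rw [hrp s _ (hmemVS s hs) h2]
    have e1 : (⟨γ s, hmemVS s hs⟩ : ↥(V ∩ S)) = (φ ⟨x, hxV⟩).1 := by
      apply Subtype.ext
      rw [hφ]; exact hfx.symm
    have e2 : (⟨((φ ⟨x, hxV⟩).2 : E), h2⟩ : ↥(f ⁻¹' {γ t})) = (φ ⟨x, hxV⟩).2 := rfl
    rw [e1, e2]
    rw [show ((φ ⟨x, hxV⟩).1, (φ ⟨x, hxV⟩).2) = φ ⟨x, hxV⟩ from rfl]
    rw [Homeomorph.symm_apply_apply]
  · -- retraction
    intro s hs v hv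
    rw [hrp s v (hmemVS s hs) hv]
    have hrm : (φ.symm (⟨γ s, hmemVS s hs⟩, ⟨v, hv⟩) : E) ∈ f ⁻¹' (V ∩ S) :=
      (φ.symm (⟨γ s, hmemVS s hs⟩, ⟨v, hv⟩)).2
    rw [hqx _ hrm]
    have : (⟨(φ.symm (⟨γ s, hmemVS s hs⟩, ⟨v, hv⟩) : E), hrm⟩ : ↥(f ⁻¹' (V ∩ S))) =
        φ.symm (⟨γ s, hmemVS s hs⟩, ⟨v, hv⟩) := rfl
    rw [this, Homeomorph.apply_symm_apply]

theorem arcTriv_glue {f : E → B} {γ : I → B} (hfc : Continuous f) (hγc : Continuous γ)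
    (hγi : Function.Injective γ) {a b d : I} {F₁ F₂ : Set E}
    (hab : a ≤ b) (hbd : b ≤ d)
    (h₁ : ArcTriv f γ a b F₁) (h₂ : ArcTriv f γ b d F₂) : ArcTriv f γ a d F₂ := by
  classical
  obtain ⟨hF₁, q₁, r₁, hq₁c, hq₁F, hr₁c, hr₁f, hc₁, hret₁⟩ := h₁
  obtain ⟨hF₂, q₂, r₂, hq₂c, hq₂F, hr₂c, hr₂f, hc₂, hret₂⟩ := h₂
  have hbab : b ∈ Icc a b := ⟨hab, le_refl b⟩
  have hbbd : b ∈ Icc b d := ⟨le_refl b, hbd⟩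
  set θ : E → E := fun v => q₂ (r₁ (b, v)) with hθ
  set θ' : E → E := fun v => q₁ (r₂ (b, v)) with hθ'
  set C₁ : Set E := f ⁻¹' (γ '' Icc a b) with hC₁
  set C₂ : Set E := f ⁻¹' (γ '' Icc b d) with hC₂
  have hC₁cl : IsClosed C₁ := ((isClosed_Icc.isCompact.image hγc).isClosed).preimage hfc
  have hC₂cl : IsClosed C₂ := ((isClosed_Icc.isCompact.image hγc).isClosed).preimage hfc
  have hcover : f ⁻¹' (γ '' Icc a d) ⊆ C₁ ∪ C₂ := by
    intro x hx
    obtain ⟨s, hs, hsx⟩ := hx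
    rcases le_total s b with h | h
    · exact Or.inl ⟨s, ⟨hs.1, h⟩, hsx⟩
    · exact Or.inr ⟨s, ⟨h, hs.2⟩, hsx⟩
  have hr₁bF : ∀ v ∈ F₁, r₁ (b, v) ∈ C₂ := fun v hv => ⟨b, hbbd, (hr₁f b hbab v hv).symm⟩
  have hr₂bF : ∀ v ∈ F₂, r₂ (b, v) ∈ C₁ := fun v hv => ⟨b, hbab, (hr₂f b hbbd v hv).symm⟩
  have hθF : ∀ v ∈ F₁, θ v ∈ F₂ := fun v hv => hq₂F _ (hr₁bF v hv)
  have hθ'F : ∀ v ∈ F₂, θ' v ∈ F₁ := fun v hv => hq₁F _ (hr₂bF v hv)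
  have hθθ' : ∀ v ∈ F₂, θ (θ' v) = v := by
    intro v hv
    show q₂ (r₁ (b, q₁ (r₂ (b, v)))) = v
    rw [hc₁ b hbab _ (hr₂f b hbbd v hv), hret₂ b hbbd v hv]
  have hθ'θ : ∀ v ∈ F₁, θ' (θ v) = v := by
    intro v hv
    show q₁ (r₂ (b, q₂ (r₁ (b, v)))) = v
    rw [hc₂ b hbbd _ (hr₁f b hbab v hv), hret₁ b hbab v hv]
  have hnotC₁ : ∀ (s : I), b < s → ∀ x : E, f x = γ s → x ∉ C₁ := by
    intro s hbs x hfx hx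
    obtain ⟨u, hu, hux⟩ := hx
    rw [hfx] at hux
    rw [hγi hux] at hu
    exact absurd hu.2 (not_le.2 hbs)
  have hθ'c : ContinuousOn θ' F₂ := by
    apply ContinuousOn.comp (g := q₁) hq₁c
    · apply hr₂c.comp (continuous_const.prodMk continuous_id).continuousOn
      intro v hv; exact ⟨hbbd, hv⟩
    · intro v hv; exact hr₂bF v hv
  set q : E → E := fun z => if z ∈ C₁ then θ (q₁ z) else q₂ z with hqdef
  set r : I × E → E := fun p => if p.1 ≤ b then r₁ (min p.1 b, θ' p.2) else r₂ (max p.1 b, p.2)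
    with hrdef
  have hoverlap : ∀ z ∈ C₁ ∩ C₂, θ (q₁ z) = q₂ z := by
    rintro z ⟨hz₁, hz₂⟩
    obtain ⟨s₁, hs₁, h₁x⟩ := hz₁
    obtain ⟨s₂, hs₂, h₂x⟩ := hz₂
    have hss : s₁ = s₂ := hγi (h₁x.trans h₂x.symm)
    subst hss
    have hsb : s₁ = b := le_antisymm hs₁.2 hs₂.1
    subst hsb
    show q₂ (r₁ (s₁, q₁ z)) = q₂ z
    rw [hc₁ s₁ hs₁ z h₁x.symm]
  refine ⟨hF₂, q, r, ?_, ?_, ?_, ?_, ?_, ?_⟩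
  · -- continuity of q
    apply ContinuousOn.mono _ hcover
    apply myContinuousOn_union_closed hC₁cl hC₂cl
    · have hcc : ContinuousOn (fun z => θ (q₁ z)) C₁ := by
        apply ContinuousOn.comp (g := q₂) hq₂c
        · apply ContinuousOn.comp (g := fun v => r₁ (b, v)) _ hq₁c
          · intro z hz; exact hq₁F z hz
          · apply hr₁c.comp (continuous_const.prodMk continuous_id).continuousOn
            intro v hv; exact ⟨hbab, hv⟩
        · intro z hz; exact hr₁bF _ (hq₁F z hz)
      refine hcc.congr fun z hz => ?_
      simp only [hqdef, if_pos hz]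
    · refine hq₂c.congr fun z hz => ?_
      simp only [hqdef]
      rcases em (z ∈ C₁) with h | h
      · rw [if_pos h]; exact hoverlap z ⟨h, hz⟩
      · rw [if_neg h]
  · -- values
    intro x hx
    rcases em (x ∈ C₁) with h | h
    · simp only [hqdef, if_pos h]
      exact hθF _ (hq₁F x h)
    · simp only [hqdef, if_neg h]
      exact hq₂F x ((hcover hx).resolve_left h)
  · -- continuity of r
    have hsub : Icc a d ×ˢ F₂ ⊆ (Icc a b ×ˢ F₂) ∪ (Icc b d ×ˢ F₂) := by
      rintro ⟨s, v⟩ ⟨hs, hv⟩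
      rcases le_total s b with h | h
      · exact Or.inl ⟨⟨hs.1, h⟩, hv⟩
      · exact Or.inr ⟨⟨h, hs.2⟩, hv⟩
    apply ContinuousOn.mono _ hsub
    apply myContinuousOn_union_closed (isClosed_Icc.prod hF₂) (isClosed_Icc.prod hF₂)
    · have hcc : ContinuousOn (fun p : I × E => r₁ (min p.1 b, θ' p.2)) (Icc a b ×ˢ F₂) := by
        apply ContinuousOn.comp (g := r₁) hr₁c
        · apply ContinuousOn.prodMk
          · exact ((continuous_fst.min continuous_const).continuousOn)
          · apply hθ'c.comp continuous_snd.continuousOn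
            rintro ⟨s, v⟩ ⟨hs, hv⟩; exact hv
        · rintro ⟨s, v⟩ ⟨hs, hv⟩
          exact ⟨⟨le_min hs.1 hab, min_le_right _ _⟩, hθ'F v hv⟩
      refine hcc.congr fun p hp => ?_
      simp only [hrdef, if_pos hp.1.2]
    · have hcc : ContinuousOn (fun p : I × E => r₂ (max p.1 b, p.2)) (Icc b d ×ˢ F₂) := by
        apply ContinuousOn.comp (g := r₂) hr₂c
        · exact ContinuousOn.prodMk ((continuous_fst.max continuous_const).continuousOn)
            continuous_snd.continuousOn
        · rintro ⟨s, v⟩ ⟨hs, hv⟩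
          exact ⟨⟨le_max_right _ _, max_le hs.2 hbd⟩, hv⟩
      refine hcc.congr fun p hp => ?_
      simp only [hrdef]
      rcases le_or_gt p.1 b with h | h
      · rw [if_pos h]
        have hpb : p.1 = b := le_antisymm h hp.1.1
        rw [min_eq_left h, hpb, max_self]
        rw [hc₁ b hbab _ (hr₂f b hbbd p.2 hp.2)]
      · rw [if_neg (not_le.2 h)]
  · -- fiber
    intro t htt v hv
    simp only [hrdef]
    rcases le_or_gt t b with h | h
    · rw [if_pos h, min_eq_left h]
      exact hr₁f t ⟨htt.1, h⟩ _ (hθ'F v hv)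
    · rw [if_neg (not_le.2 h), max_eq_left h.le]
      exact hr₂f t ⟨h.le, htt.2⟩ v hv
  · -- compat
    intro t htt x hfx
    rcases le_or_gt t b with h | h
    · have hxC₁ : x ∈ C₁ := ⟨t, ⟨htt.1, h⟩, hfx.symm⟩
      simp only [hqdef, hrdef, if_pos hxC₁, if_pos h, min_eq_left h]
      rw [hθ'θ _ (hq₁F x hxC₁)]
      exact hc₁ t ⟨htt.1, h⟩ x hfx
    · have hxC₁ : x ∉ C₁ := hnotC₁ t h x hfx
      simp only [hqdef, hrdef, if_neg hxC₁, if_neg (not_le.2 h), max_eq_left h.le]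
      exact hc₂ t ⟨h.le, htt.2⟩ x hfx
  · -- retraction
    intro t htt v hv
    simp only [hrdef]
    rcases le_or_gt t b with h | h
    · rw [if_pos h, min_eq_left h]
      have hm : r₁ (t, θ' v) ∈ C₁ := ⟨t, ⟨htt.1, h⟩, (hr₁f t ⟨htt.1, h⟩ _ (hθ'F v hv)).symm⟩
      simp only [hqdef, if_pos hm]
      rw [hret₁ t ⟨htt.1, h⟩ _ (hθ'F v hv)]
      exact hθθ' v hv
    · rw [if_neg (not_le.2 h), max_eq_left h.le]
      have hm : r₂ (t, v) ∉ C₁ := hnotC₁ t h _ (hr₂f t ⟨h.le, htt.2⟩ v hv)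
      simp only [hqdef, if_neg hm]
      exact hret₂ t ⟨h.le, htt.2⟩ v hv

theorem arcTriv_single {f : E → B} {γ : I → B} (hfc : Continuous f) (hγc : Continuous γ)
    (hlt : IsLocTrivOn f (γ '' {s : I | s ≠ 0})) (c : I) (hc : c ≠ 0) :
    ∃ F : Set E, ArcTriv f γ c c F := by
  obtain ⟨η, hη, F, hF⟩ := arcTriv_local hfc hγc hlt c hc
  exact ⟨F, hF c c hc (le_refl c) (by simpa using hη) (by simpa using hη)⟩

theorem arcTriv_exists {f : E → B} {γ : I → B} (hfc : Continuous f) (hγc : Continuous γ)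
    (hγi : Function.Injective γ) (hlt : IsLocTrivOn f (γ '' {s : I | s ≠ 0}))
    (c : I) (hc : c ≠ 0) : ∃ F : Set E, ArcTriv f γ c 1 F := by
  set A : Set ℝ := {x : ℝ | ∃ s : I, (s:ℝ) = x ∧ c ≤ s ∧ ∃ F : Set E, ArcTriv f γ s 1 F}
    with hA
  have hcpos : (0:ℝ) < c := unitInterval_pos_of_ne_zero hc
  have h1A : (1:ℝ) ∈ A := by
    refine ⟨1, rfl, ?_, arcTriv_single hfc hγc hlt 1 (by norm_num [Subtype.ext_iff])⟩
    exact Subtype.coe_le_coe.1 (by simpa using c.2.2)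
  have hAne : A.Nonempty := ⟨1, h1A⟩
  have hAlb : ∀ x ∈ A, (c:ℝ) ≤ x := by
    rintro x ⟨s, rfl, hcs, _⟩; exact hcs
  have hbdd : BddBelow A := ⟨c, hAlb⟩
  set a : ℝ := sInf A with ha
  have hca : (c:ℝ) ≤ a := le_csInf hAne hAlb
  have ha1 : a ≤ 1 := csInf_le hbdd h1A
  have haI : a ∈ Set.Icc (0:ℝ) 1 := ⟨le_trans c.2.1 hca, ha1⟩
  set aI : I := ⟨a, haI⟩ with haI'
  have haI0 : aI ≠ 0 := by
    intro h
    have h' := congrArg Subtype.val h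
    have h0 : a = 0 := h'
    linarith
  obtain ⟨η, hη, Floc, hFloc⟩ := arcTriv_local hfc hγc hlt aI haI0
  obtain ⟨x, hxA, hxlt⟩ := exists_lt_of_csInf_lt hAne (show sInf A < a + η/2 by linarith)
  obtain ⟨sI, hsIx, hcsI, F, hTrivs⟩ := hxA
  have hasI : a ≤ (sI:ℝ) := by
    rw [hsIx]; exact csInf_le hbdd ⟨sI, hsIx, hcsI, F, hTrivs⟩
  set a₀r : ℝ := max (c:ℝ) (a - η/2) with ha₀r
  have ha₀I : a₀r ∈ Set.Icc (0:ℝ) 1 := by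
    constructor
    · exact le_trans c.2.1 (le_max_left _ _)
    · apply max_le c.2.2; linarith
  set a₀ : I := ⟨a₀r, ha₀I⟩ with ha₀
  have ha₀0 : a₀ ≠ 0 := by
    intro h
    have h' := congrArg Subtype.val h
    have h0 : a₀r = 0 := h'
    have : (c:ℝ) ≤ a₀r := le_max_left _ _
    linarith
  have ha₀a : a₀r ≤ a := max_le hca (by linarith)
  have ha₀sI : a₀ ≤ sI := Subtype.coe_le_coe.1 (le_trans ha₀a hasI)
  have htriv1 : ArcTriv f γ a₀ sI Floc := by
    apply hFloc a₀ sI ha₀0 ha₀sI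
    · rw [abs_sub_lt_iff]
      constructor
      · show a₀r - a < η; linarith
      · show a - a₀r < η
        have : a - η/2 ≤ a₀r := le_max_right _ _
        linarith
    · rw [abs_sub_lt_iff]
      constructor
      · show (sI:ℝ) - a < η; rw [hsIx]; linarith
      · show a - (sI:ℝ) < η; linarith
  have htriv : ArcTriv f γ a₀ 1 F := by
    apply arcTriv_glue hfc hγc hγi ha₀sI _ htriv1 hTrivs
    exact Subtype.coe_le_coe.1 (by simpa using sI.2.2)
  have ha₀A : a₀r ∈ A := ⟨a₀, rfl, Subtype.coe_le_coe.1 (le_max_left _ _), F, htriv⟩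
  have haa₀ : a ≤ a₀r := csInf_le hbdd ha₀A
  rcases le_or_gt (a - η/2) (c:ℝ) with h | h
  · have : a₀ = c := Subtype.ext (max_eq_left h)
    rw [← this]; exact ⟨F, htriv⟩
  · exfalso
    have : a₀r = a - η/2 := max_eq_right h.le
    rw [this] at haa₀; linarith


/-- **Lemma 4.2 (Lemma 43).** Let `f : ℝ^m → ℝ^n` be a polynomial map and `γ` an embedded
arc such that `f` is a locally trivial fibration over `γ((0,1])`.  If
`g : S^i × (0,1] → E` is a trivial emerging `i`-cycle, with triviality witnessed by
`ε > 0` and a fibered map `ḡ : S^i × [0,ε] → E` with `g(·,s)` homotopic to `ḡ(·,s)` in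
`f⁻¹(γ(s))` for each `s ∈ (0,ε]`, then there are `0 < ε' < ε` and a fibered map
`g̃ : S^i × [0,1] → E` with `g̃ = ḡ` on `[0,ε']` and `g̃ = g` on `[ε,1]`. -/
theorem trivial_emerging_cycle_extends_over_arc
    (m n : ℕ)
    (f : EuclideanSpace ℝ (Fin m) → EuclideanSpace ℝ (Fin n)) (hf : IsPolyMap f)
    (γ : I → EuclideanSpace ℝ (Fin n)) (hγc : Continuous γ)
    (hγi : Function.Injective γ)
    (hlt : IsLocTrivOn f (γ '' {s : I | s ≠ 0}))
    (i : ℕ) (g : ↥(SphS i) × {s : I // s ≠ 0} → EuclideanSpace ℝ (Fin m))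
    (hg : IsEmergingCycle f γ i g)
    (ε : I) (hε : ε ≠ 0)
    (gbar : ↥(SphS i) × {s : I // s ≤ ε} → EuclideanSpace ℝ (Fin m))
    (hgbarc : Continuous gbar)
    (hgbarfib : ∀ x (s : {s : I // s ≤ ε}), f (gbar (x, s)) = γ s.1)
    (hhom : ∀ (s : I) (hs0 : s ≠ 0) (hsε : s ≤ ε),
      HomotopicIn (fun x => g (x, ⟨s, hs0⟩)) (fun x => gbar (x, ⟨s, hsε⟩))
        (f ⁻¹' {γ s})) :
    ∃ ε' : I, ε' ≠ 0 ∧ ε' < ε ∧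
      ∃ gt : ↥(SphS i) × I → EuclideanSpace ℝ (Fin m),
        Continuous gt ∧ (∀ x s, f (gt (x, s)) = γ s) ∧
        (∀ x (s : I) (hsε' : s ≤ ε') (hsε : s ≤ ε), gt (x, s) = gbar (x, ⟨s, hsε⟩)) ∧
        ∀ x (s : I) (hεs : ε ≤ s) (hs0 : s ≠ 0), gt (x, s) = g (x, ⟨s, hs0⟩) := by
  classical
  obtain ⟨hgc, hgf, -⟩ := hg
  -- `f` is continuous since it is polynomial
  have hfc : Continuous f := by
    have h1 : ∀ j, Continuous fun x => f x j := by
      intro j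
      obtain ⟨P, hP⟩ := hf j
      simp only [hP]
      exact (MvPolynomial.continuous_eval (p := P)).comp
        (continuous_pi fun k => (continuous_apply k).comp (PiLp.continuous_ofLp 2 _))
    exact (PiLp.continuous_toLp 2 _).comp (continuous_pi h1)
  have hε0 : (0:ℝ) < ε := unitInterval_pos_of_ne_zero hε
  have hε1 : (ε:ℝ) ≤ 1 := ε.2.2
  -- the subdivision points ε' < a < b < ε
  set ε' : I := ⟨(ε:ℝ)/2, by constructor <;> linarith⟩ with hε'def
  set a : I := ⟨3*(ε:ℝ)/4, by constructor <;> linarith⟩ with hadef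
  set b : I := ⟨7*(ε:ℝ)/8, by constructor <;> linarith⟩ with hbdef
  have hε'R : (ε':ℝ) = (ε:ℝ)/2 := rfl
  have haR : (a:ℝ) = 3*(ε:ℝ)/4 := rfl
  have hbR : (b:ℝ) = 7*(ε:ℝ)/8 := rfl
  have hε'0 : ε' ≠ 0 := by
    intro h; have h' : (ε:ℝ)/2 = 0 := congrArg Subtype.val h; linarith
  have ha0 : a ≠ 0 := by
    intro h; have h' : 3*(ε:ℝ)/4 = 0 := congrArg Subtype.val h; linarith
  have hε'ε : ε' ≤ ε := Subtype.coe_le_coe.1 (by rw [hε'R]; linarith)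
  have hε'a : ε' ≤ a := Subtype.coe_le_coe.1 (by rw [hε'R, haR]; linarith)
  have haε : a ≤ ε := Subtype.coe_le_coe.1 (by rw [haR]; linarith)
  have habI : a ≤ b := Subtype.coe_le_coe.1 (by rw [haR, hbR]; linarith)
  have hbε : b ≤ ε := Subtype.coe_le_coe.1 (by rw [hbR]; linarith)
  have hε'ltε : ε' < ε := Subtype.coe_lt_coe.1 (by rw [hε'R]; linarith)
  have haltε : ¬ (ε ≤ a) := by
    intro h; have := Subtype.coe_le_coe.2 h; rw [haR] at this; linarith
  have hbltε : ¬ (ε ≤ b) := by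
    intro h; have := Subtype.coe_le_coe.2 h; rw [hbR] at this; linarith
  have hε'lta : ¬ (a ≤ ε') := by
    intro h; have := Subtype.coe_le_coe.2 h; rw [haR, hε'R] at this; linarith
  -- the global trivialization over γ([ε',1])
  obtain ⟨F, hFcl, q, r, hqc, hqF, hrc, hrf, hcmp, hret⟩ :=
    arcTriv_exists hfc hγc hγi hlt ε' hε'0
  -- the homotopy between g and gbar in the fiber over γ a
  obtain ⟨H, hHc, hHmem, hH0, hH1⟩ := hhom a ha0 haε
  -- reparametrizations
  set τh : I → I := fun s => Set.projIcc (0:ℝ) 1 zero_le_one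
    (((b:ℝ) - (s:ℝ)) / ((b:ℝ) - (a:ℝ))) with hτdef
  set ℓv : I → I := fun s => max a (Set.projIcc (0:ℝ) 1 zero_le_one
    ((a:ℝ) + ((s:ℝ) - (b:ℝ)) * (((ε:ℝ) - (a:ℝ)) / ((ε:ℝ) - (b:ℝ))))) with hℓdef
  have hℓne : ∀ s, ℓv s ≠ 0 := by
    intro s h
    have h1 : a ≤ ℓv s := le_max_left _ _
    rw [h] at h1
    have h2 := Subtype.coe_le_coe.2 h1
    rw [haR] at h2
    have : ((0:I):ℝ) = 0 := rfl
    rw [this] at h2; linarith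
  have hℓup : ∀ s, ℓv s ∈ Icc ε' 1 := fun s => ⟨le_trans hε'a (le_max_left _ _), unitInterval.le_one'⟩
  have hmaxne : ∀ s : I, max ε s ≠ 0 := by
    intro s h
    have h1 : ε ≤ max ε s := le_max_left _ _
    rw [h] at h1
    have h2 := Subtype.coe_le_coe.2 h1
    have : ((0:I):ℝ) = 0 := rfl
    rw [this] at h2; linarith
  -- the five pieces
  set P1 : ↥(SphS i) × I → EuclideanSpace ℝ (Fin m) :=
    fun p => gbar (p.1, ⟨min p.2 ε, min_le_right _ _⟩) with hP1def
  set P2 : ↥(SphS i) × I → EuclideanSpace ℝ (Fin m) :=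
    fun p => r (max ε' p.2, q (gbar (p.1, ⟨min (max ε' p.2) ε, min_le_right _ _⟩))) with hP2def
  set P3 : ↥(SphS i) × I → EuclideanSpace ℝ (Fin m) :=
    fun p => r (max ε' p.2, q (H (p.1, τh p.2))) with hP3def
  set P4 : ↥(SphS i) × I → EuclideanSpace ℝ (Fin m) :=
    fun p => r (max ε' p.2, q (g (p.1, ⟨ℓv p.2, hℓne p.2⟩))) with hP4def
  set P5 : ↥(SphS i) × I → EuclideanSpace ℝ (Fin m) :=
    fun p => g (p.1, ⟨max ε p.2, hmaxne p.2⟩) with hP5def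
  -- memberships
  have hm2 : ∀ p : ↥(SphS i) × I,
      gbar (p.1, ⟨min (max ε' p.2) ε, min_le_right _ _⟩) ∈ f ⁻¹' (γ '' Icc ε' 1) :=
    fun p => ⟨min (max ε' p.2) ε, ⟨le_min (le_max_left _ _) hε'ε, unitInterval.le_one'⟩,
      (hgbarfib p.1 ⟨min (max ε' p.2) ε, min_le_right _ _⟩).symm⟩
  have hm3 : ∀ p : ↥(SphS i) × I, H (p.1, τh p.2) ∈ f ⁻¹' (γ '' Icc ε' 1) := by
    intro p
    have := hHmem (p.1, τh p.2)
    exact ⟨a, ⟨hε'a, unitInterval.le_one'⟩, this.symm⟩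
  have hm4 : ∀ p : ↥(SphS i) × I,
      g (p.1, ⟨ℓv p.2, hℓne p.2⟩) ∈ f ⁻¹' (γ '' Icc ε' 1) :=
    fun p => ⟨ℓv p.2, hℓup p.2, (hgf p.1 ⟨ℓv p.2, hℓne p.2⟩).symm⟩
  have hmax1 : ∀ s : I, max ε' s ∈ Icc ε' 1 := fun s => ⟨le_max_left _ _, unitInterval.le_one'⟩
  -- continuity of the pieces
  have hc1 : Continuous P1 :=
    hgbarc.comp (continuous_fst.prodMk
      ((continuous_snd.min continuous_const).subtype_mk _))
  have hcmax : Continuous fun p : ↥(SphS i) × I => max ε' p.2 :=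
    continuous_const.max continuous_snd
  have hc2 : Continuous P2 := by
    have hin : Continuous fun p : ↥(SphS i) × I =>
        q (gbar (p.1, ⟨min (max ε' p.2) ε, min_le_right _ _⟩)) := by
      apply hqc.comp_continuous
      · exact hgbarc.comp (continuous_fst.prodMk
          (((continuous_const.max continuous_snd).min continuous_const).subtype_mk _))
      · exact hm2
    exact hrc.comp_continuous (hcmax.prodMk hin)
      fun p => ⟨hmax1 p.2, hqF _ (hm2 p)⟩
  have hτc : Continuous τh := by
    apply continuous_projIcc.comp
    exact (continuous_const.sub continuous_subtype_val).div_const _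
  have hc3 : Continuous P3 := by
    have hin : Continuous fun p : ↥(SphS i) × I => q (H (p.1, τh p.2)) := by
      apply hqc.comp_continuous
      · exact hHc.comp (continuous_fst.prodMk (hτc.comp continuous_snd))
      · exact hm3
    exact hrc.comp_continuous (hcmax.prodMk hin)
      fun p => ⟨hmax1 p.2, hqF _ (hm3 p)⟩
  have hℓc : Continuous ℓv := by
    apply Continuous.max continuous_const
    apply continuous_projIcc.comp
    exact continuous_const.add ((continuous_subtype_val.sub continuous_const).mul
      continuous_const)
  have hc4 : Continuous P4 := by
    have hin : Continuous fun p : ↥(SphS i) × I => q (g (p.1, ⟨ℓv p.2, hℓne p.2⟩)) := by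
      apply hqc.comp_continuous
      · exact hgc.comp (continuous_fst.prodMk ((hℓc.comp continuous_snd).subtype_mk _))
      · exact hm4
    exact hrc.comp_continuous (hcmax.prodMk hin)
      fun p => ⟨hmax1 p.2, hqF _ (hm4 p)⟩
  have hc5 : Continuous P5 :=
    hgc.comp (continuous_fst.prodMk
      ((continuous_const.max continuous_snd).subtype_mk _))
  -- reparametrization values at the junctions
  have hbane : (b:ℝ) - (a:ℝ) ≠ 0 := by rw [haR, hbR]; intro h; linarith
  have hεbne : (ε:ℝ) - (b:ℝ) ≠ 0 := by rw [hbR]; intro h; linarith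
  have hτa : τh a = 1 := by
    apply Subtype.ext
    show max 0 (min 1 (((b:ℝ) - (a:ℝ)) / ((b:ℝ) - (a:ℝ)))) = ((1:I):ℝ)
    rw [div_self hbane]
    norm_num
  have hτb : τh b = 0 := by
    apply Subtype.ext
    show max 0 (min 1 (((b:ℝ) - (b:ℝ)) / ((b:ℝ) - (a:ℝ)))) = ((0:I):ℝ)
    rw [sub_self, zero_div]
    norm_num
  have hℓb : ℓv b = a := by
    show max a _ = a
    have h1 : (a:ℝ) + ((b:ℝ) - (b:ℝ)) * (((ε:ℝ) - (a:ℝ)) / ((ε:ℝ) - (b:ℝ))) = (a:ℝ) := by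
      ring
    rw [h1, Set.projIcc_of_mem zero_le_one a.2]
    simp
  have hℓε : ℓv ε = ε := by
    show max a _ = ε
    have h1 : (a:ℝ) + ((ε:ℝ) - (b:ℝ)) * (((ε:ℝ) - (a:ℝ)) / ((ε:ℝ) - (b:ℝ))) = (ε:ℝ) := by
      rw [mul_comm, div_mul_cancel₀ _ hεbne]; ring
    rw [h1, Set.projIcc_of_mem zero_le_one ε.2]
    exact max_eq_right haε
  -- junction equalities
  have hE1 : ∀ p : ↥(SphS i) × I, p.2 = ε' → P1 p = P2 p := by
    rintro ⟨x, s⟩ hs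
    simp only at hs
    subst hs
    simp only [hP1def, hP2def, max_self]
    have e1 : (⟨min ε' ε, min_le_right _ _⟩ : {u : I // u ≤ ε}) = ⟨ε', hε'ε⟩ :=
      Subtype.ext (min_eq_left hε'ε)
    rw [e1]
    exact (hcmp ε' ⟨le_refl _, unitInterval.le_one'⟩ _ (hgbarfib x ⟨ε', hε'ε⟩)).symm
  have hE2 : ∀ p : ↥(SphS i) × I, p.2 = a → P2 p = P3 p := by
    rintro ⟨x, s⟩ hs
    simp only at hs
    subst hs
    simp only [hP2def, hP3def, hτa, max_eq_right hε'a, hH1]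
    have e1 : (⟨min a ε, min_le_right _ _⟩ : {u : I // u ≤ ε}) = ⟨a, haε⟩ :=
      Subtype.ext (min_eq_left haε)
    rw [e1]
  have hE3 : ∀ p : ↥(SphS i) × I, p.2 = b → P3 p = P4 p := by
    rintro ⟨x, s⟩ hs
    simp only at hs
    subst hs
    simp only [hP3def, hP4def, hτb, hH0]
    have e1 : (⟨ℓv b, hℓne b⟩ : {u : I // u ≠ 0}) = ⟨a, ha0⟩ := Subtype.ext hℓb
    rw [e1]
  have hP4ε : ∀ x, P4 (x, ε) = g (x, ⟨ε, hε⟩) := by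
    intro x
    simp only [hP4def, max_eq_right hε'ε]
    have e1 : (⟨ℓv ε, hℓne ε⟩ : {u : I // u ≠ 0}) = ⟨ε, hε⟩ := Subtype.ext hℓε
    rw [e1]
    exact hcmp ε ⟨hε'ε, unitInterval.le_one'⟩ _ (hgf x ⟨ε, hε⟩)
  have hE4 : ∀ p : ↥(SphS i) × I, p.2 = ε → P4 p = P5 p := by
    rintro ⟨x, s⟩ hs
    simp only at hs
    subst hs
    rw [hP4ε x]
    simp only [hP5def, max_self]
  set gt : ↥(SphS i) × I → EuclideanSpace ℝ (Fin m) := fun p =>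
    if p.2 ≤ ε' then P1 p else if p.2 ≤ a then P2 p
    else if p.2 ≤ b then P3 p else if p.2 ≤ ε then P4 p else P5 p with hgtdef
  refine ⟨ε', hε'0, hε'ltε, gt, ?_, ?_, ?_, ?_⟩
  · -- continuity
    refine Continuous.if_le hc1 ?_ continuous_snd continuous_const ?_
    rotate_left
    · intro p hp
      rw [hE1 p hp, if_pos (show p.2 ≤ a by rw [hp]; exact hε'a)]
    refine Continuous.if_le hc2 ?_ continuous_snd continuous_const ?_
    rotate_left
    · intro p hp
      rw [hE2 p hp, if_pos (show p.2 ≤ b by rw [hp]; exact habI)]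
    refine Continuous.if_le hc3 ?_ continuous_snd continuous_const ?_
    rotate_left
    · intro p hp
      rw [hE3 p hp, if_pos (show p.2 ≤ ε by rw [hp]; exact hbε)]
    exact Continuous.if_le hc4 hc5 continuous_snd continuous_const hE4
  · -- fiber condition
    intro x s
    simp only [hgtdef]
    rcases le_or_gt s ε' with h1 | h1
    · rw [if_pos h1]
      simp only [hP1def]
      rw [hgbarfib]
      exact congrArg γ (min_eq_left (le_trans h1 hε'ε))
    rw [if_neg (not_le.2 h1)]
    rcases le_or_gt s a with h2 | h2
    · rw [if_pos h2]
      simp only [hP2def]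
      rw [hrf _ (hmax1 s) _ (hqF _ (hm2 (x, s)))]
      exact congrArg γ (max_eq_right h1.le)
    rw [if_neg (not_le.2 h2)]
    rcases le_or_gt s b with h3 | h3
    · rw [if_pos h3]
      simp only [hP3def]
      rw [hrf _ (hmax1 s) _ (hqF _ (hm3 (x, s)))]
      exact congrArg γ (max_eq_right h1.le)
    rw [if_neg (not_le.2 h3)]
    rcases le_or_gt s ε with h4 | h4
    · rw [if_pos h4]
      simp only [hP4def]
      rw [hrf _ (hmax1 s) _ (hqF _ (hm4 (x, s)))]
      exact congrArg γ (max_eq_right h1.le)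
    · rw [if_neg (not_le.2 h4)]
      simp only [hP5def]
      rw [hgf]
      exact congrArg γ (max_eq_right h4.le)
  · -- agreement with gbar on [0, ε']
    intro x s hsε' hsε
    simp only [hgtdef, if_pos hsε', hP1def]
    have e1 : (⟨min s ε, min_le_right _ _⟩ : {u : I // u ≤ ε}) = ⟨s, hsε⟩ :=
      Subtype.ext (min_eq_left hsε)
    rw [e1]
  · -- agreement with g on [ε, 1]
    intro x s hεs hs0
    have h1 : ¬ (s ≤ ε') := fun h => absurd (le_trans hεs h) (not_le.2 hε'ltε)
    have h2 : ¬ (s ≤ a) := fun h => haltε (le_trans hεs h)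
    have h3 : ¬ (s ≤ b) := fun h => hbltε (le_trans hεs h)
    simp only [hgtdef, if_neg h1, if_neg h2, if_neg h3]
    rcases le_or_gt s ε with h4 | h4
    · rw [if_pos h4]
      have hsε : s = ε := le_antisymm h4 hεs
      subst hsε
      rw [hP4ε x]
    · rw [if_neg (not_le.2 h4)]
      simp only [hP5def]
      have e1 : (⟨max ε s, hmaxne s⟩ : {u : I // u ≠ 0}) = ⟨s, hs0⟩ :=
        Subtype.ext (max_eq_right hεs)
      rw [e1]
end
end

section
/- Let F = (f_1, f_2, f_3): ℝ^5 → ℝ^3 be the polynomial map defined by f_1(x,y,z,u,v) = y² + (u²x+1)(vx−1)(x² + (v−u²)x + 1), f_2(x,y,z,u,v) = (z² + u²) − v(u²+1)(z²+1), f_3(x,y,z,u,v) = u, and let δ = {(0,0,u) ∈ ℝ^3 : u ∈ [0,1]}. Then the restriction of F to F^{-1}(δ) has no singular point: at every point p ∈ ℝ^5 with F(p) ∈ δ, the total derivative DF(p): ℝ^5 → ℝ^3 is surjective. -/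
noncomputable section

/-- The polynomial map `F = (f₁, f₂, f₃) : ℝ⁵ → ℝ³` from Section 5. -/
def F : ℝ × ℝ × ℝ × ℝ × ℝ → ℝ × ℝ × ℝ :=
  fun (x, y, z, u, v) =>
    (y ^ 2 + (u ^ 2 * x + 1) * (v * x - 1) * (x ^ 2 + (v - u ^ 2) * x + 1),
      (z ^ 2 + u ^ 2) - v * (u ^ 2 + 1) * (z ^ 2 + 1),
      u)

/-- The arc `δ = {(0,0,u) : u ∈ [0,1]} ⊆ ℝ³`. -/
def δ : Set (ℝ × ℝ × ℝ) := {w | w.1 = 0 ∧ w.2.1 = 0 ∧ w.2.2 ∈ Set.Icc (0 : ℝ) 1}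

lemma F_diff : Differentiable ℝ F := by
  have h : F = fun p : ℝ × ℝ × ℝ × ℝ × ℝ =>
    (p.2.1 ^ 2 + (p.2.2.2.1 ^ 2 * p.1 + 1) * (p.2.2.2.2 * p.1 - 1) *
      (p.1 ^ 2 + (p.2.2.2.2 - p.2.2.2.1 ^ 2) * p.1 + 1),
      (p.2.2.1 ^ 2 + p.2.2.2.1 ^ 2) - p.2.2.2.2 * (p.2.2.2.1 ^ 2 + 1) * (p.2.2.1 ^ 2 + 1),
      p.2.2.2.1) := rfl
  rw [h]; fun_prop

lemma hd_congr {E : Type*} [NormedAddCommGroup E] [NormedSpace ℝ E]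
    {f : ℝ → E} {a b : E} {x : ℝ} (h : HasDerivAt f a x) (hab : a = b) :
    HasDerivAt f b x := hab ▸ h

/-- directional derivative via curve -/
lemma fderiv_dir (p w : ℝ × ℝ × ℝ × ℝ × ℝ) {D : ℝ × ℝ × ℝ}
    (h : HasDerivAt (fun t : ℝ => F (p + t • w)) D 0) : fderiv ℝ F p w = D := by
  have hc : HasDerivAt (fun t : ℝ => p + t • w) w 0 := by
    simpa using ((hasDerivAt_id (0 : ℝ)).smul_const w).const_add p
  have h2 : HasDerivAt (fun t : ℝ => F (p + t • w)) (fderiv ℝ F p w) 0 := by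
    have h3 := ((F_diff (p + (0:ℝ) • w)).hasFDerivAt).comp_hasDerivAt 0 hc
    simp only [zero_smul, add_zero] at h3
    exact h3
  exact h2.unique h

lemma surj_of_triangular (L : (ℝ × ℝ × ℝ × ℝ × ℝ) →L[ℝ] (ℝ × ℝ × ℝ))
    (w1 w2 w3 : ℝ × ℝ × ℝ × ℝ × ℝ) (e γ d α β : ℝ) (he : e ≠ 0) (hd : d ≠ 0)
    (h1 : L w1 = (e, 0, 0)) (h2 : L w2 = (γ, d, 0)) (h3 : L w3 = (α, β, 1)) :
    Function.Surjective L := by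
  rintro ⟨a, b, c⟩
  refine ⟨((a - c * α - ((b - c * β) / d) * γ) / e) • w1 + ((b - c * β) / d) • w2 + c • w3, ?_⟩
  simp only [map_add, map_smul, h1, h2, h3, Prod.smul_mk, smul_eq_mul, Prod.mk_add_mk,
    Prod.mk.injEq]
  refine ⟨by field_simp; ring, by field_simp; ring, by ring⟩


/-- **Claim 1 of Section 5.** The restriction of `F` to `F⁻¹(δ)` has no singular point:
at every `p` with `F p ∈ δ`, the total derivative `DF(p) : ℝ⁵ → ℝ³` is surjective. -/
theorem F_restriction_no_singularity :
    ∀ p : ℝ × ℝ × ℝ × ℝ × ℝ, F p ∈ δ → Function.Surjective (fderiv ℝ F p) := by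
  rintro ⟨x, y, z, u, v⟩ ⟨h1, h2, hu0, hu1⟩
  simp only [F] at h1 h2 hu0 hu1
  -- h1 : y^2 + A*B*C = 0, h2 : (z^2+u^2) - v*(u^2+1)*(z^2+1) = 0
  set p : ℝ × ℝ × ℝ × ℝ × ℝ := (x, y, z, u, v) with hp
  -- directional derivative in v
  have hwv : fderiv ℝ F p (0, 0, 0, 0, 1) =
      ((u ^ 2 * x + 1) * x * ((v * x - 1) + (x ^ 2 + (v - u ^ 2) * x + 1)),
        -((u ^ 2 + 1) * (z ^ 2 + 1)), 0) := by
    apply fderiv_dir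
    have hcurve : (fun t : ℝ => F (p + t • ((0:ℝ), (0:ℝ), (0:ℝ), (0:ℝ), (1:ℝ)))) =
        (fun t : ℝ => (y ^ 2 + (u ^ 2 * x + 1) * ((v + t) * x - 1) *
            (x ^ 2 + ((v + t) - u ^ 2) * x + 1),
          (z ^ 2 + u ^ 2) - (v + t) * (u ^ 2 + 1) * (z ^ 2 + 1), u)) := by
      funext t
      simp only [hp, Prod.smul_mk, smul_eq_mul, mul_zero, mul_one, Prod.mk_add_mk, add_zero, F]
    rw [hcurve]
    have hv : HasDerivAt (fun t : ℝ => v + t) 1 0 := (hasDerivAt_id 0).const_add v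
    have hB : HasDerivAt (fun t : ℝ => (v + t) * x - 1) (1 * x) 0 := (hv.mul_const x).sub_const 1
    have hC : HasDerivAt (fun t : ℝ => x ^ 2 + ((v + t) - u ^ 2) * x + 1) (1 * x) 0 := by
      exact (((hv.sub_const (u ^ 2)).mul_const x).const_add (x ^ 2)).add_const 1
    have hc1 : HasDerivAt (fun t : ℝ => y ^ 2 + (u ^ 2 * x + 1) * ((v + t) * x - 1) *
        (x ^ 2 + ((v + t) - u ^ 2) * x + 1))
        ((u ^ 2 * x + 1) * x * ((v * x - 1) + (x ^ 2 + (v - u ^ 2) * x + 1))) 0 := by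
      refine hd_congr (((hB.const_mul (u ^ 2 * x + 1)).mul hC).const_add (y ^ 2)) ?_
      ring
    have hc2 : HasDerivAt (fun t : ℝ => (z ^ 2 + u ^ 2) - (v + t) * (u ^ 2 + 1) * (z ^ 2 + 1))
        (-((u ^ 2 + 1) * (z ^ 2 + 1))) 0 := by
      refine hd_congr (((hv.mul_const (u ^ 2 + 1)).mul_const (z ^ 2 + 1)).const_sub
        (z ^ 2 + u ^ 2)) ?_
      ring
    exact hc1.prodMk (hc2.prodMk (hasDerivAt_const 0 u))
  -- directional derivative in u
  have hwu : fderiv ℝ F p (0, 0, 0, 1, 0) =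
      (2 * u * x * (v * x - 1) * ((x ^ 2 + (v - u ^ 2) * x + 1) - (u ^ 2 * x + 1)),
        2 * u * (1 - v * (z ^ 2 + 1)), 1) := by
    apply fderiv_dir
    have hcurve : (fun t : ℝ => F (p + t • ((0:ℝ), (0:ℝ), (0:ℝ), (1:ℝ), (0:ℝ)))) =
        (fun t : ℝ => (y ^ 2 + ((u + t) ^ 2 * x + 1) * (v * x - 1) *
            (x ^ 2 + (v - (u + t) ^ 2) * x + 1),
          (z ^ 2 + (u + t) ^ 2) - v * ((u + t) ^ 2 + 1) * (z ^ 2 + 1), u + t)) := by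
      funext t
      simp only [hp, Prod.smul_mk, smul_eq_mul, mul_zero, mul_one, Prod.mk_add_mk, add_zero, F]
    rw [hcurve]
    have hu : HasDerivAt (fun t : ℝ => u + t) 1 0 := (hasDerivAt_id 0).const_add u
    have hsq : HasDerivAt (fun t : ℝ => (u + t) ^ 2) (2 * (u + 0) ^ 1 * 1) 0 := hu.pow 2
    have hA : HasDerivAt (fun t : ℝ => (u + t) ^ 2 * x + 1) (2 * (u + 0) ^ 1 * 1 * x) 0 :=
      (hsq.mul_const x).add_const 1
    have hC : HasDerivAt (fun t : ℝ => x ^ 2 + (v - (u + t) ^ 2) * x + 1)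
        (-(2 * (u + 0) ^ 1 * 1) * x) 0 :=
      (((hsq.const_sub v).mul_const x).const_add (x ^ 2)).add_const 1
    have hc1 : HasDerivAt (fun t : ℝ => y ^ 2 + ((u + t) ^ 2 * x + 1) * (v * x - 1) *
        (x ^ 2 + (v - (u + t) ^ 2) * x + 1))
        (2 * u * x * (v * x - 1) * ((x ^ 2 + (v - u ^ 2) * x + 1) - (u ^ 2 * x + 1))) 0 := by
      refine hd_congr (((hA.mul_const (v * x - 1)).mul hC).const_add (y ^ 2)) ?_
      ring
    have hc2 : HasDerivAt (fun t : ℝ => (z ^ 2 + (u + t) ^ 2) - v * ((u + t) ^ 2 + 1) *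
        (z ^ 2 + 1)) (2 * u * (1 - v * (z ^ 2 + 1))) 0 := by
      refine hd_congr ((hsq.const_add (z ^ 2)).sub
        (((hsq.add_const 1).const_mul v).mul_const (z ^ 2 + 1))) ?_
      ring
    exact hc1.prodMk (hc2.prodMk hu)
  -- abbreviation for second-row pivot
  have hdnz : -((u ^ 2 + 1) * (z ^ 2 + 1)) ≠ 0 := neg_ne_zero.mpr (by positivity)
  by_cases hy : y = 0
  · -- use direction e_x
    subst hy
    -- partial derivative in x
    have hwx : fderiv ℝ F p (1, 0, 0, 0, 0) =
        (u ^ 2 * ((v * x - 1) * (x ^ 2 + (v - u ^ 2) * x + 1)) +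
          (u ^ 2 * x + 1) * (v * (x ^ 2 + (v - u ^ 2) * x + 1)) +
          (u ^ 2 * x + 1) * (v * x - 1) * (2 * x + (v - u ^ 2)), 0, 0) := by
      apply fderiv_dir
      have hcurve : (fun t : ℝ => F (p + t • ((1:ℝ), (0:ℝ), (0:ℝ), (0:ℝ), (0:ℝ)))) =
          (fun t : ℝ => ((0:ℝ) ^ 2 + (u ^ 2 * (x + t) + 1) * (v * (x + t) - 1) *
              ((x + t) ^ 2 + (v - u ^ 2) * (x + t) + 1),
            (z ^ 2 + u ^ 2) - v * (u ^ 2 + 1) * (z ^ 2 + 1), u)) := by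
        funext t
        simp only [hp, Prod.smul_mk, smul_eq_mul, mul_zero, mul_one, Prod.mk_add_mk, add_zero, F]
      rw [hcurve]
      have hx : HasDerivAt (fun t : ℝ => x + t) 1 0 := (hasDerivAt_id 0).const_add x
      have hA : HasDerivAt (fun t : ℝ => u ^ 2 * (x + t) + 1) (u ^ 2 * 1) 0 :=
        (hx.const_mul (u ^ 2)).add_const 1
      have hB : HasDerivAt (fun t : ℝ => v * (x + t) - 1) (v * 1) 0 :=
        (hx.const_mul v).sub_const 1
      have hC : HasDerivAt (fun t : ℝ => (x + t) ^ 2 + (v - u ^ 2) * (x + t) + 1)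
          (2 * (x + 0) ^ 1 * 1 + (v - u ^ 2) * 1) 0 :=
        ((hx.pow 2).add (hx.const_mul (v - u ^ 2))).add_const 1
      have hc1 : HasDerivAt (fun t : ℝ => (0:ℝ) ^ 2 + (u ^ 2 * (x + t) + 1) * (v * (x + t) - 1) *
          ((x + t) ^ 2 + (v - u ^ 2) * (x + t) + 1))
          (u ^ 2 * ((v * x - 1) * (x ^ 2 + (v - u ^ 2) * x + 1)) +
            (u ^ 2 * x + 1) * (v * (x ^ 2 + (v - u ^ 2) * x + 1)) +
            (u ^ 2 * x + 1) * (v * x - 1) * (2 * x + (v - u ^ 2))) 0 := by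
        refine hd_congr (((hA.mul hB).mul hC).const_add ((0:ℝ) ^ 2)) ?_
        simp only [Pi.mul_apply]
        ring
      exact hc1.prodMk ((hasDerivAt_const 0 _).prodMk (hasDerivAt_const 0 u))
    -- show the x-partial of f1 is nonzero
    have hABC : (u ^ 2 * x + 1) * (v * x - 1) * (x ^ 2 + (v - u ^ 2) * x + 1) = 0 := by
      nlinarith [h1]
    have hv0 : 0 ≤ v := by nlinarith [sq_nonneg z, sq_nonneg u, sq_nonneg (z * u)]
    have hv1 : v < 1 := by nlinarith [sq_nonneg (z * u), sq_nonneg z, sq_nonneg u]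
    have hu2le : u ^ 2 ≤ 1 := by nlinarith
    have hvu : (v - u ^ 2) ^ 2 ≤ 1 := by
      nlinarith [mul_nonneg (by linarith : (0:ℝ) ≤ 1 + (v - u ^ 2))
        (by linarith [sq_nonneg u] : (0:ℝ) ≤ 1 - (v - u ^ 2))]
    have hC : 0 < x ^ 2 + (v - u ^ 2) * x + 1 := by
      nlinarith [sq_nonneg (2 * x + (v - u ^ 2))]
    have hAB : (u ^ 2 * x + 1) * (v * x - 1) = 0 := by
      rcases mul_eq_zero.mp hABC with h | h
      · exact h
      · exact absurd h (ne_of_gt hC)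
    have hE : u ^ 2 * ((v * x - 1) * (x ^ 2 + (v - u ^ 2) * x + 1)) +
          (u ^ 2 * x + 1) * (v * (x ^ 2 + (v - u ^ 2) * x + 1)) +
          (u ^ 2 * x + 1) * (v * x - 1) * (2 * x + (v - u ^ 2)) ≠ 0 := by
      rcases mul_eq_zero.mp hAB with hA | hB
      · -- u^2*x + 1 = 0
        have hu2 : (0:ℝ) < u ^ 2 := by
          rcases eq_or_ne u 0 with h | h
          · exfalso; rw [h] at hA; norm_num at hA
          · positivity
        have hBneg : u ^ 2 * (v * x - 1) < 0 := by nlinarith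
        have heq : u ^ 2 * ((v * x - 1) * (x ^ 2 + (v - u ^ 2) * x + 1)) +
            (u ^ 2 * x + 1) * (v * (x ^ 2 + (v - u ^ 2) * x + 1)) +
            (u ^ 2 * x + 1) * (v * x - 1) * (2 * x + (v - u ^ 2)) =
            (u ^ 2 * (v * x - 1)) * (x ^ 2 + (v - u ^ 2) * x + 1) := by
          linear_combination (v * (x ^ 2 + (v - u ^ 2) * x + 1) +
            (v * x - 1) * (2 * x + (v - u ^ 2))) * hA
        rw [heq]
        exact ne_of_lt (mul_neg_of_neg_of_pos hBneg hC)
      · -- v*x - 1 = 0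
        have hvne : (0:ℝ) < v := by
          rcases eq_or_ne v 0 with h | h
          · exfalso; rw [h] at hB; norm_num at hB
          · exact lt_of_le_of_ne hv0 (Ne.symm h)
        have hApos : 0 < u ^ 2 * x + 1 := by
          have : v * (u ^ 2 * x + 1) = u ^ 2 + v := by
            linear_combination u ^ 2 * hB
          nlinarith [sq_nonneg u]
        have heq : u ^ 2 * ((v * x - 1) * (x ^ 2 + (v - u ^ 2) * x + 1)) +
            (u ^ 2 * x + 1) * (v * (x ^ 2 + (v - u ^ 2) * x + 1)) +
            (u ^ 2 * x + 1) * (v * x - 1) * (2 * x + (v - u ^ 2)) =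
            ((u ^ 2 * x + 1) * v) * (x ^ 2 + (v - u ^ 2) * x + 1) := by
          linear_combination (u ^ 2 * (x ^ 2 + (v - u ^ 2) * x + 1) +
            (u ^ 2 * x + 1) * (2 * x + (v - u ^ 2))) * hB
        rw [heq]
        positivity
    exact surj_of_triangular _ _ _ _ _ _ _ _ _ hE hdnz hwx hwv hwu
  · -- y ≠ 0 : use direction e_y
    have hwy : fderiv ℝ F p (0, 1, 0, 0, 0) = (2 * y, 0, 0) := by
      apply fderiv_dir
      have hcurve : (fun t : ℝ => F (p + t • ((0:ℝ), (1:ℝ), (0:ℝ), (0:ℝ), (0:ℝ)))) =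
          (fun t : ℝ => ((y + t) ^ 2 + (u ^ 2 * x + 1) * (v * x - 1) *
              (x ^ 2 + (v - u ^ 2) * x + 1),
            (z ^ 2 + u ^ 2) - v * (u ^ 2 + 1) * (z ^ 2 + 1), u)) := by
        funext t
        simp only [hp, Prod.smul_mk, smul_eq_mul, mul_zero, mul_one, Prod.mk_add_mk, add_zero, F]
      rw [hcurve]
      have hy' : HasDerivAt (fun t : ℝ => y + t) 1 0 := (hasDerivAt_id 0).const_add y
      have hc1 : HasDerivAt (fun t : ℝ => (y + t) ^ 2 + (u ^ 2 * x + 1) * (v * x - 1) *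
          (x ^ 2 + (v - u ^ 2) * x + 1)) (2 * y) 0 := by
        refine hd_congr ((hy'.pow 2).add_const _) ?_
        ring
      exact hc1.prodMk ((hasDerivAt_const 0 _).prodMk (hasDerivAt_const 0 u))
    exact surj_of_triangular _ _ _ _ _ _ _ _ _ (by simpa using mul_ne_zero two_ne_zero hy)
      hdnz hwy hwv hwu
end
end

section
/- Let g(x,u,v) = (u²x+1)(vx−1)(x² + (v−u²)x + 1), let g_0(x,z) = g(x, 0, z²/(z²+1)), and let X_0 = {(x,y,z) ∈ ℝ³ : y² + g_0(x,z) = 0}. Then X_0 (with the subspace topology from ℝ³) is homeomorphic to S¹ × ℝ, where S¹ is the unit circle. -/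
noncomputable section

/-- The polynomial `g(x,u,v) = (u²x+1)(vx−1)(x²+(v−u²)x+1)` from Section 5. -/
def g (x u v : ℝ) : ℝ := (u ^ 2 * x + 1) * (v * x - 1) * (x ^ 2 + (v - u ^ 2) * x + 1)

/-- `g₀(x,z) = g(x, 0, z²/(z²+1))`. -/
def g₀ (x z : ℝ) : ℝ := g x 0 (z ^ 2 / (z ^ 2 + 1))

/-- `X₀ = {(x,y,z) ∈ ℝ³ : y² + g₀(x,z) = 0}`, identified with the fiber `F⁻¹(0,0,0)`. -/
def X₀ : Set (ℝ × ℝ × ℝ) := {w | w.2.1 ^ 2 + g₀ w.1 w.2.2 = 0}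

/-- The unit circle `S¹ = {(a,b) ∈ ℝ² : a² + b² = 1}`. -/
def circleS : Set (ℝ × ℝ) := {p | p.1 ^ 2 + p.2 ^ 2 = 1}

/-! ### Auxiliary constructions

We factor the homeomorphism `X₀ ≃ₜ S¹ × ℝ` through two intermediate spaces:
`X₂ = {(b,Y,z) : Y² + b z² = 1}` and the punctured plane `P = ℝ² \ {0}`. -/

/-- Intermediate surface `{(b,Y,z) : Y² + b z² = 1}`. -/
def X₂ : Set (ℝ × ℝ × ℝ) := {w | w.2.1 ^ 2 + w.1 * w.2.2 ^ 2 = 1}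

/-- The punctured plane. -/
def P : Set (ℝ × ℝ) := {p | 0 < p.1 ^ 2 + p.2 ^ 2}

lemma hquad (x z : ℝ) : 0 < x^2 + z^2/(z^2+1)*x + 1 := by
  have h0 : (0:ℝ) < z^2+1 := by positivity
  have h1 : z^2/(z^2+1) < 1 := by rw [div_lt_one h0]; linarith
  have h2 : 0 ≤ z^2/(z^2+1) := by positivity
  nlinarith [sq_nonneg (2*x + z^2/(z^2+1)), mul_nonneg h2 h2]

def F1 (w : ℝ × ℝ × ℝ) : ℝ × ℝ × ℝ :=
  (w.1/(w.2.2^2+1), w.2.1/Real.sqrt (w.1^2 + w.2.2^2/(w.2.2^2+1)*w.1 + 1), w.2.2)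

def G1 (w : ℝ × ℝ × ℝ) : ℝ × ℝ × ℝ :=
  (w.1*(w.2.2^2+1),
   w.2.1*Real.sqrt ((w.1*(w.2.2^2+1))^2 + w.2.2^2/(w.2.2^2+1)*(w.1*(w.2.2^2+1)) + 1),
   w.2.2)

lemma sqrt_quad_ne (x z : ℝ) : Real.sqrt (x^2 + z^2/(z^2+1)*x + 1) ≠ 0 :=
  Real.sqrt_ne_zero'.mpr (hquad x z)

lemma F1_mem {x y z : ℝ} (hw : (x,y,z) ∈ X₀) : F1 (x,y,z) ∈ X₂ := by
  simp only [X₀, Set.mem_setOf_eq, g₀, g] at hw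
  simp only [F1, X₂, Set.mem_setOf_eq]
  have hq := hquad x z
  have hz : (z:ℝ)^2+1 ≠ 0 := by positivity
  have h1 : (y/Real.sqrt (x^2 + z^2/(z^2+1)*x + 1))^2
      = y^2/(x^2 + z^2/(z^2+1)*x + 1) := by
    rw [div_pow, Real.sq_sqrt hq.le]
  rw [h1]
  have hy : y^2 = (1 - z^2/(z^2+1)*x)*(x^2 + z^2/(z^2+1)*x + 1) := by
    linear_combination hw
  rw [hy, mul_div_assoc, div_self hq.ne', mul_one]
  ring

lemma G1_mem {b Y z : ℝ} (hw : (b,Y,z) ∈ X₂) : G1 (b,Y,z) ∈ X₀ := by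
  simp only [X₂, Set.mem_setOf_eq] at hw
  simp only [G1, X₀, Set.mem_setOf_eq, g₀, g]
  have hq := hquad (b*(z^2+1)) z
  have hz : (z:ℝ)^2+1 ≠ 0 := by positivity
  rw [mul_pow, Real.sq_sqrt hq.le]
  have hY2 : Y^2 = 1 - b*z^2 := by linarith
  rw [hY2]
  field_simp
  ring

/-- Step 1: `X₀ ≃ₜ X₂`. -/
def e1 : ↥X₀ ≃ₜ ↥X₂ where
  toFun w := ⟨F1 w.1, by obtain ⟨⟨x,y,z⟩, hw⟩ := w; exact F1_mem hw⟩
  invFun w := ⟨G1 w.1, by obtain ⟨⟨b,Y,z⟩, hw⟩ := w; exact G1_mem hw⟩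
  left_inv := by
    rintro ⟨⟨x,y,z⟩, hw⟩
    apply Subtype.ext
    simp only [F1, G1]
    have hz : (z:ℝ)^2+1 ≠ 0 := by positivity
    have hx : x/(z^2+1)*(z^2+1) = x := div_mul_cancel₀ x hz
    rw [hx, div_mul_cancel₀ y (sqrt_quad_ne x z)]
  right_inv := by
    rintro ⟨⟨b,Y,z⟩, hw⟩
    apply Subtype.ext
    simp only [F1, G1]
    have hz : (z:ℝ)^2+1 ≠ 0 := by positivity
    rw [mul_div_cancel_right₀ b hz,
      mul_div_cancel_right₀ Y (sqrt_quad_ne (b*(z^2+1)) z)]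
  continuous_toFun := by
    apply Continuous.subtype_mk
    have hF : Continuous F1 := by
      refine Continuous.prodMk ?_ (Continuous.prodMk ?_ ?_)
      · exact Continuous.div (by fun_prop) (by fun_prop) (fun w => by positivity)
      · refine Continuous.div (by fun_prop)
          (Real.continuous_sqrt.comp ?_) (fun w => sqrt_quad_ne _ _)
        have : Continuous fun w : ℝ×ℝ×ℝ => w.2.2^2/(w.2.2^2+1) :=
          Continuous.div (by fun_prop) (by fun_prop) (fun w => by positivity)
        fun_prop
      · fun_prop
    exact hF.comp continuous_subtype_val
  continuous_invFun := by
    apply Continuous.subtype_mk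
    have hG : Continuous G1 := by
      have hv : Continuous fun w : ℝ×ℝ×ℝ => w.2.2^2/(w.2.2^2+1) :=
        Continuous.div (by fun_prop) (by fun_prop) (fun w => by positivity)
      refine Continuous.prodMk (by fun_prop) (Continuous.prodMk ?_ (by fun_prop))
      refine Continuous.mul (by fun_prop) (Real.continuous_sqrt.comp ?_)
      fun_prop
    exact hG.comp continuous_subtype_val

def Sf (b z : ℝ) : ℝ := Real.sqrt ((b - z^2)^2 + 4)
def Df (b z : ℝ) : ℝ := ((b + z^2) + Sf b z)/2
lemma Sf_nonneg (b z : ℝ) : 0 ≤ Sf b z := Real.sqrt_nonneg _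
lemma Sf_sq (b z : ℝ) : Sf b z ^ 2 = (b - z^2)^2 + 4 := Real.sq_sqrt (by positivity)

lemma Dpos {b Y z : ℝ} (hw : Y^2 + b*z^2 = 1) : 0 < Df b z := by
  have hS2 := Sf_sq b z
  have hS0 := Sf_nonneg b z
  set S := Sf b z with hSdef
  have h4 : (S + (b+z^2)) * (S - (b+z^2)) = 4*Y^2 := by linear_combination hS2 - 4*hw
  rcases le_or_gt (b+z^2) 0 with h|h
  · have hge : 0 ≤ S - (b+z^2) := by linarith
    have hne : S - (b+z^2) ≠ 0 := by
      intro h0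
      rw [h0, mul_zero] at h4
      have hY : Y = 0 := by nlinarith
      have hbz : b*z^2 = 1 := by nlinarith
      nlinarith [sq_nonneg z]
    have hpos : 0 < S - (b+z^2) := lt_of_le_of_ne hge (Ne.symm hne)
    have : 0 < S + (b+z^2) := by
      by_contra hc
      push_neg at hc
      nlinarith [sq_nonneg Y]
    unfold Df
    linarith
  · unfold Df; linarith

lemma sqrtD_pos {b Y z : ℝ} (hw : Y^2 + b*z^2 = 1) : 0 < Real.sqrt (Df b z) :=
  Real.sqrt_pos.mpr (Dpos hw)

/-- forward map `X₂ → P`. -/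
def F2 (w : ℝ × ℝ × ℝ) : ℝ × ℝ :=
  (w.2.2, w.2.1 / Real.sqrt (Df w.1 w.2.2))

/-- inverse map `P → X₂`. -/
def G2 (p : ℝ × ℝ) : ℝ × ℝ × ℝ :=
  (1/(p.1^2+p.2^2) - p.2^2, p.2 * Real.sqrt (1/(p.1^2+p.2^2)+p.1^2), p.1)

lemma F2_mem {b Y z : ℝ} (hw : (b,Y,z) ∈ X₂) : F2 (b,Y,z) ∈ P := by
  simp only [X₂, Set.mem_setOf_eq] at hw
  simp only [F2, P, Set.mem_setOf_eq]
  rcases eq_or_ne z 0 with hz | hz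
  · subst hz
    have hY2 : Y^2 = 1 := by linarith [hw]
    have hY : Y ≠ 0 := by intro h; rw [h] at hY2; norm_num at hY2
    have hs := sqrtD_pos hw
    positivity
  · have h1 : 0 < z^2 := by positivity
    positivity

lemma G2_mem {p q : ℝ} (hp : (p,q) ∈ P) : G2 (p,q) ∈ X₂ := by
  simp only [P, Set.mem_setOf_eq] at hp
  simp only [G2, X₂, Set.mem_setOf_eq]
  have hE : (0:ℝ) ≤ 1/(p^2+q^2)+p^2 := by positivity
  rw [mul_pow, Real.sq_sqrt hE]
  field_simp
  ring

lemma G2_F2 {b Y z : ℝ} (hw : (b,Y,z) ∈ X₂) : G2 (F2 (b,Y,z)) = (b,Y,z) := by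
  simp only [X₂, Set.mem_setOf_eq] at hw
  simp only [F2, G2]
  have hD := Dpos hw
  have hsD := sqrtD_pos hw
  have hS2 := Sf_sq b z
  have hS0 := Sf_nonneg b z
  set S := Sf b z with hSdef
  set q : ℝ := Y / Real.sqrt (Df b z) with hqdef
  have hq2 : q^2 = Y^2 / Df b z := by
    rw [hqdef, div_pow, Real.sq_sqrt hD.le]
  have hxD : (S - (b+z^2))/2 * Df b z = Y^2 := by
    unfold Df
    linear_combination hS2/4 - hw
  have hq2' : q^2 = (S - (b+z^2))/2 := by
    rw [hq2, eq_comm, eq_div_iff hD.ne']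
    exact hxD
  have hzq : z^2 + q^2 = (S - b + z^2)/2 := by rw [hq2']; ring
  have hzqpos : 0 < z^2 + q^2 := by
    rw [hzq]
    nlinarith [hS2, hS0, sq_nonneg (S + b - z^2)]
  have hprod : (b + q^2)*(z^2+q^2) = 1 := by
    rw [hq2']
    linear_combination hS2/4
  have h1 : 1/(z^2+q^2) = b + q^2 := by
    rw [div_eq_iff hzqpos.ne']
    linarith [hprod]
  have harg : 1/(z^2+q^2) + z^2 = Df b z := by
    rw [h1, hq2']
    unfold Df
    ring
  have hfirst : 1/(z^2+q^2) - q^2 = b := by rw [h1]; ring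
  have hsecond : q * Real.sqrt (1/(z^2+q^2) + z^2) = Y := by
    rw [harg, hqdef, div_mul_cancel₀ Y hsD.ne']
  simp only [Prod.mk.injEq]
  exact ⟨hfirst, hsecond, trivial⟩

lemma F2_G2 {p q : ℝ} (hp : (p,q) ∈ P) : F2 (G2 (p,q)) = (p,q) := by
  simp only [P, Set.mem_setOf_eq] at hp
  simp only [F2, G2]
  have hE : (0:ℝ) < 1/(p^2+q^2)+p^2 := by positivity
  set b : ℝ := 1/(p^2+q^2) - q^2 with hbdef
  have hkeynn : (0:ℝ) ≤ b + p^2 + 2*q^2 := by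
    have h2 : b + p^2 + 2*q^2 = 1/(p^2+q^2) + p^2 + q^2 := by rw [hbdef]; ring
    rw [h2]; positivity
  have hsqeq : (b - p^2)^2 + 4 = (b + p^2 + 2*q^2)^2 := by
    rw [hbdef]
    field_simp
    ring
  have hkey : Sf b p = b + p^2 + 2*q^2 := by
    unfold Sf
    rw [hsqeq, Real.sqrt_sq hkeynn]
  have hD : Df b p = 1/(p^2+q^2) + p^2 := by
    unfold Df
    rw [hkey, hbdef]
    ring
  simp only [Prod.mk.injEq]
  refine ⟨trivial, ?_⟩
  rw [hD, mul_div_assoc, div_self (Real.sqrt_ne_zero'.mpr hE), mul_one]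

/-- Step 2: `X₂ ≃ₜ P`. -/
def e2 : ↥X₂ ≃ₜ ↥P where
  toFun w := ⟨F2 w.1, by obtain ⟨⟨b,Y,z⟩, hw⟩ := w; exact F2_mem hw⟩
  invFun p := ⟨G2 p.1, by obtain ⟨⟨a,c⟩, hp⟩ := p; exact G2_mem hp⟩
  left_inv := by
    rintro ⟨⟨b,Y,z⟩, hw⟩
    exact Subtype.ext (G2_F2 hw)
  right_inv := by
    rintro ⟨⟨p,q⟩, hp⟩
    exact Subtype.ext (F2_G2 hp)
  continuous_toFun := by
    apply Continuous.subtype_mk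
    refine Continuous.prodMk (by fun_prop) ?_
    refine Continuous.div (by fun_prop) ?_ ?_
    · have : Continuous fun w : ↥X₂ => Df w.1.1 w.1.2.2 := by
        unfold Df Sf
        fun_prop
      exact Real.continuous_sqrt.comp this
    · rintro ⟨⟨b,Y,z⟩, hw⟩
      exact (sqrtD_pos hw).ne'
  continuous_invFun := by
    apply Continuous.subtype_mk
    have hn : ∀ p : ↥P, (p.1.1^2 + p.1.2^2) ≠ 0 := by
      rintro ⟨⟨a,c⟩, hp⟩
      exact (show (0:ℝ) < a^2+c^2 from hp).ne'
    have hnc : Continuous fun p : ↥P => p.1.1^2 + p.1.2^2 := by fun_prop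
    have hinv : Continuous fun p : ↥P => 1/(p.1.1^2 + p.1.2^2) :=
      Continuous.div continuous_const hnc hn
    refine Continuous.prodMk ?_ (Continuous.prodMk ?_ (by fun_prop))
    · exact hinv.sub (by fun_prop)
    · exact Continuous.mul (by fun_prop)
        (Real.continuous_sqrt.comp (hinv.add (by fun_prop)))

def nf (p : ℝ × ℝ) : ℝ := Real.sqrt (p.1^2 + p.2^2)

lemma nf_pos {p : ℝ × ℝ} (hp : p ∈ P) : 0 < nf p := Real.sqrt_pos.mpr hp

/-- Step 3: `P ≃ₜ S¹ × ℝ` (polar coordinates). -/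
def e3 : ↥P ≃ₜ ↥circleS × ℝ where
  toFun p := (⟨(p.1.1/nf p.1, p.1.2/nf p.1), by
      obtain ⟨⟨a,c⟩, hp⟩ := p
      have hn := nf_pos hp
      simp only [circleS, Set.mem_setOf_eq]
      have hsq : nf (a,c)^2 = a^2+c^2 := Real.sq_sqrt (by positivity)
      rw [div_pow, div_pow, ← add_div, ← hsq, div_self (by positivity)]⟩,
    Real.log (nf p.1))
  invFun c := ⟨(Real.exp c.2 * c.1.1.1, Real.exp c.2 * c.1.1.2), by
      obtain ⟨⟨⟨a,b⟩, hc⟩, t⟩ := c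
      simp only [circleS, Set.mem_setOf_eq] at hc
      simp only [P, Set.mem_setOf_eq]
      have h : (Real.exp t * a)^2 + (Real.exp t * b)^2 = (Real.exp t)^2 := by
        linear_combination (Real.exp t)^2 * hc
      rw [h]
      positivity⟩
  left_inv := by
    rintro ⟨⟨a,c⟩, hp⟩
    have hn := nf_pos hp
    apply Subtype.ext
    simp only
    rw [Real.exp_log hn]
    have h1 : nf (a,c) * (a / nf (a,c)) = a := by field_simp
    have h2 : nf (a,c) * (c / nf (a,c)) = c := by field_simp
    rw [h1, h2]
  right_inv := by
    rintro ⟨⟨⟨a,b⟩, hc⟩, t⟩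
    simp only [circleS, Set.mem_setOf_eq] at hc
    have h : nf (Real.exp t * a, Real.exp t * b) = Real.exp t := by
      unfold nf
      simp only
      rw [show (Real.exp t * a)^2 + (Real.exp t * b)^2 = (Real.exp t)^2 by
        linear_combination (Real.exp t)^2 * hc]
      exact Real.sqrt_sq (Real.exp_pos t).le
    have he := (Real.exp_pos t).ne'
    refine Prod.ext (Subtype.ext ?_) ?_
    · simp only [h]
      rw [mul_div_cancel_left₀ a he, mul_div_cancel_left₀ b he]
    · simp only [h, Real.log_exp]
  continuous_toFun := by
    have hnc : Continuous fun p : ↥P => nf p.1 := by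
      unfold nf; fun_prop
    have hne : ∀ p : ↥P, nf p.1 ≠ 0 := fun p => (nf_pos p.2).ne'
    refine Continuous.prodMk (Continuous.subtype_mk ?_ _) ?_
    · exact Continuous.prodMk (Continuous.div (by fun_prop) hnc hne)
        (Continuous.div (by fun_prop) hnc hne)
    · exact Real.continuousOn_log.comp_continuous hnc hne
  continuous_invFun := by
    apply Continuous.subtype_mk
    fun_prop

/-- **Claim 2 of Section 5.** `X₀ = F⁻¹(0,0,0)` is homeomorphic to `S¹ × ℝ`. -/
theorem X₀_homeomorph_circle_prod_real : Nonempty (↥X₀ ≃ₜ ↥circleS × ℝ) := by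
  exact ⟨(e1.trans e2).trans e3⟩
end
end

section
/- Let g(x,u,v) = (u²x+1)(vx−1)(x² + (v−u²)x + 1) and, for u ∈ (0,1], let g_u(x,z) = g(x, u, (z²+u²)/((u²+1)(z²+1))) and X_u = {(x,y,z) ∈ ℝ³ : y² + g_u(x,z) = 0}. Then for every u with 0 < u ≤ 1, the set X_u (with the subspace topology from ℝ³) is homeomorphic to S¹ × ℝ, where S¹ is the unit circle. -/
noncomputable section

/-- `g_u(x,z) = g(x, u, (z²+u²)/((u²+1)(z²+1)))`. -/
def gu (u x z : ℝ) : ℝ := g x u ((z ^ 2 + u ^ 2) / ((u ^ 2 + 1) * (z ^ 2 + 1)))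

/-- `X_u = {(x,y,z) ∈ ℝ³ : y² + g_u(x,z) = 0}`, identified with the fiber `F⁻¹(0,0,u)`. -/
def Xu (u : ℝ) : Set (ℝ × ℝ × ℝ) := {w | w.2.1 ^ 2 + gu u w.1 w.2.2 = 0}

namespace ClaimAux

def vz (u z : ℝ) : ℝ := (z ^ 2 + u ^ 2) / ((u ^ 2 + 1) * (z ^ 2 + 1))
def a0 (u : ℝ) : ℝ := -(1 / u ^ 2)
def b0 (u z : ℝ) : ℝ := ((u ^ 2 + 1) * (z ^ 2 + 1)) / (z ^ 2 + u ^ 2)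
def dz (u z : ℝ) : ℝ := b0 u z - a0 u
def Tm (u x z : ℝ) : ℝ := (2 * x - (a0 u + b0 u z)) / dz u z
def qx (u x z : ℝ) : ℝ := x ^ 2 + (vz u z - u ^ 2) * x + 1
def km (u x z : ℝ) : ℝ := 2 / (dz u z * u * Real.sqrt (vz u z * qx u x z))
def X0 (u a z : ℝ) : ℝ := (dz u z * a + a0 u + b0 u z) / 2

variable {u : ℝ}

lemma vz_pos (hu : 0 < u) (z : ℝ) : 0 < vz u z :=
  div_pos (by positivity) (by positivity)

lemma vz_lt_one (hu : 0 < u) (z : ℝ) : vz u z < 1 := by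
  rw [vz, div_lt_one (by positivity)]
  nlinarith [sq_nonneg (u * z)]

lemma vz_mul_b0 (hu : 0 < u) (z : ℝ) : vz u z * b0 u z = 1 := by
  have h1 : (u ^ 2 + 1) * (z ^ 2 + 1) ≠ 0 := by positivity
  have h2 : z ^ 2 + u ^ 2 ≠ 0 := by positivity
  rw [vz, b0]
  field_simp

lemma a0_neg (hu : 0 < u) : a0 u < 0 := by
  have : (0:ℝ) < 1 / u ^ 2 := by positivity
  rw [a0]; linarith

lemma b0_pos (hu : 0 < u) (z : ℝ) : 0 < b0 u z :=
  div_pos (by positivity) (by positivity)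

lemma dz_pos (hu : 0 < u) (z : ℝ) : 0 < dz u z := by
  have h1 := a0_neg hu
  have h2 := b0_pos hu z
  rw [dz]; linarith

lemma qx_pos (hu : 0 < u) (hu1 : u ≤ 1) (x z : ℝ) : 0 < qx u x z := by
  have hv := vz_pos hu z
  have hv1 := vz_lt_one hu z
  have hu2 : u ^ 2 ≤ 1 := by nlinarith
  have hc1 : vz u z - u ^ 2 < 1 := by nlinarith
  have hc2 : -1 < vz u z - u ^ 2 := by linarith
  rw [qx]
  nlinarith [sq_nonneg (2 * x + (vz u z - u ^ 2)),
    mul_pos (by linarith : (0:ℝ) < 1 - (vz u z - u ^ 2))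
      (by linarith : (0:ℝ) < 1 + (vz u z - u ^ 2))]

lemma km_pos (hu : 0 < u) (hu1 : u ≤ 1) (x z : ℝ) : 0 < km u x z := by
  rw [km]
  exact div_pos two_pos (mul_pos (mul_pos (dz_pos hu z) hu)
    (Real.sqrt_pos.mpr (mul_pos (vz_pos hu z) (qx_pos hu hu1 x z))))

lemma sq_km (hu : 0 < u) (hu1 : u ≤ 1) (x z : ℝ) :
    km u x z ^ 2 = 4 / (dz u z ^ 2 * u ^ 2 * (vz u z * qx u x z)) := by
  rw [km, div_pow, mul_pow, mul_pow,
    Real.sq_sqrt (mul_pos (vz_pos hu z) (qx_pos hu hu1 x z)).le]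
  norm_num

lemma gu_eq (x z : ℝ) :
    gu u x z = (u ^ 2 * x + 1) * (vz u z * x - 1) * qx u x z := rfl

lemma hfac (hu : 0 < u) (x z : ℝ) :
    gu u x z = -(u ^ 2 * vz u z * (x - a0 u) * (b0 u z - x) * qx u x z) := by
  have h1 : u ^ 2 * (x - a0 u) = u ^ 2 * x + 1 := by
    rw [a0]
    field_simp
    ring
  have h2 := vz_mul_b0 hu z
  rw [gu_eq]
  linear_combination (u ^ 2 * x + 1) * qx u x z * h2 +
    vz u z * (b0 u z - x) * qx u x z * h1

lemma hT (hu : 0 < u) (x z : ℝ) :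
    1 - Tm u x z ^ 2 = 4 * (x - a0 u) * (b0 u z - x) / dz u z ^ 2 := by
  have hd : dz u z ≠ 0 := (dz_pos hu z).ne'
  rw [Tm]
  field_simp
  rw [dz]
  ring

lemma key (hu : 0 < u) (hu1 : u ≤ 1) (x z : ℝ) :
    -(gu u x z) * km u x z ^ 2 = 1 - Tm u x z ^ 2 := by
  have hq := (qx_pos hu hu1 x z).ne'
  have hv := (vz_pos hu z).ne'
  have hd := (dz_pos hu z).ne'
  have hu0 := hu.ne'
  rw [hfac hu, sq_km hu hu1, hT hu]
  field_simp

lemma Tm_X0 (hu : 0 < u) (a z : ℝ) : Tm u (X0 u a z) z = a := by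
  have hd : dz u z ≠ 0 := (dz_pos hu z).ne'
  rw [Tm, X0]
  field_simp
  ring

lemma X0_Tm (hu : 0 < u) (x z : ℝ) : X0 u (Tm u x z) z = x := by
  rw [X0, Tm, mul_div_cancel₀ _ (dz_pos hu z).ne']
  ring

lemma forward_mem (hu : 0 < u) (hu1 : u ≤ 1) {x y z : ℝ}
    (h : y ^ 2 + gu u x z = 0) :
    (Tm u x z, y * km u x z) ∈ circleS := by
  have hy : y ^ 2 = -(gu u x z) := by linarith
  show Tm u x z ^ 2 + (y * km u x z) ^ 2 = 1
  rw [mul_pow, hy]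
  linarith [key hu hu1 x z]

lemma inv_mem (hu : 0 < u) (hu1 : u ≤ 1) {a b : ℝ} (z : ℝ)
    (hc : a ^ 2 + b ^ 2 = 1) :
    (X0 u a z, b / km u (X0 u a z) z, z) ∈ Xu u := by
  set x := X0 u a z with hx
  have hk : km u x z ≠ 0 := (km_pos hu hu1 x z).ne'
  have hb : b ^ 2 = 1 - a ^ 2 := by linarith
  have ha : a = Tm u x z := (Tm_X0 hu a z).symm
  show (b / km u x z) ^ 2 + gu u x z = 0
  have : (b / km u x z) ^ 2 = -(gu u x z) := by
    rw [div_pow, hb, ha, ← key hu hu1 x z, mul_div_assoc,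
      div_self (pow_ne_zero 2 hk), mul_one]
  linarith

lemma cont_vz (hu : 0 < u) : Continuous (vz u) := by
  unfold vz
  exact Continuous.div (by continuity) (by continuity) fun z => by positivity

lemma cont_b0 (hu : 0 < u) : Continuous (b0 u) := by
  unfold b0
  exact Continuous.div (by continuity) (by continuity) fun z => by positivity

lemma cont_dz (hu : 0 < u) : Continuous (dz u) := by
  unfold dz
  exact (cont_b0 hu).sub continuous_const

lemma cont_q (hu : 0 < u) : Continuous fun p : ℝ × ℝ => qx u p.1 p.2 := by
  simp only [qx]
  exact ((continuous_fst.pow 2).add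
    ((((cont_vz hu).comp continuous_snd).sub continuous_const).mul continuous_fst)).add
    continuous_const

lemma cont_T (hu : 0 < u) : Continuous fun p : ℝ × ℝ => Tm u p.1 p.2 := by
  simp only [Tm]
  exact Continuous.div
    ((continuous_const.mul continuous_fst).sub
      (continuous_const.add ((cont_b0 hu).comp continuous_snd)))
    ((cont_dz hu).comp continuous_snd)
    (fun p => (dz_pos hu p.2).ne')

lemma cont_k (hu : 0 < u) (hu1 : u ≤ 1) :
    Continuous fun p : ℝ × ℝ => km u p.1 p.2 := by
  simp only [km]
  refine continuous_const.div ?_ fun p => ?_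
  · exact (((cont_dz hu).comp continuous_snd).mul continuous_const).mul
      (Real.continuous_sqrt.comp
        (((cont_vz hu).comp continuous_snd).mul (cont_q hu)))
  · exact mul_ne_zero (mul_ne_zero (dz_pos hu p.2).ne' hu.ne')
      (Real.sqrt_pos.mpr (mul_pos (vz_pos hu p.2) (qx_pos hu hu1 p.1 p.2))).ne'

lemma cont_X0 (hu : 0 < u) : Continuous fun p : ℝ × ℝ => X0 u p.1 p.2 := by
  simp only [X0]
  exact (((((cont_dz hu).comp continuous_snd).mul continuous_fst).add
    continuous_const).add ((cont_b0 hu).comp continuous_snd)).div_const 2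

end ClaimAux

open ClaimAux

set_option maxHeartbeats 1000000 in
/-- **Claim 3 of Section 5.** For `0 < u ≤ 1`, the set `X_u = F⁻¹(0,0,u)` is homeomorphic
to `S¹ × ℝ`. -/
theorem Xu_homeomorph_circle_prod_real :
    ∀ u : ℝ, 0 < u → u ≤ 1 → Nonempty (↥(Xu u) ≃ₜ ↥circleS × ℝ) := by
  intro u hu hu1
  refine ⟨Homeomorph.mk ⟨
    fun p => (⟨(Tm u p.1.1 p.1.2.2, p.1.2.1 * km u p.1.1 p.1.2.2),
      forward_mem hu hu1 p.2⟩, p.1.2.2),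
    fun q => ⟨(X0 u q.1.1.1 q.2, q.1.1.2 / km u (X0 u q.1.1.1 q.2) q.2, q.2),
      inv_mem hu hu1 q.2 q.1.2⟩,
    ?_, ?_⟩ ?_ ?_⟩
  · rintro ⟨⟨x, y, z⟩, hm⟩
    apply Subtype.ext
    simp only [X0_Tm hu, mul_div_cancel_right₀ _ (km_pos hu hu1 x z).ne']
  · rintro ⟨⟨⟨a, b⟩, hc⟩, z⟩
    refine Prod.ext (Subtype.ext ?_) rfl
    simp only [Tm_X0 hu, div_mul_cancel₀ _ (km_pos hu hu1 (X0 u a z) z).ne']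
  · refine Continuous.prodMk (Continuous.subtype_mk ?_ _) ?_
    · exact ((cont_T hu).comp
        (continuous_subtype_val.fst.prodMk continuous_subtype_val.snd.snd)).prodMk
        (continuous_subtype_val.snd.fst.mul ((cont_k hu hu1).comp
          (continuous_subtype_val.fst.prodMk continuous_subtype_val.snd.snd)))
    · exact continuous_subtype_val.snd.snd
  · refine Continuous.subtype_mk ?_ _
    have hX := cont_X0 (u := u) hu
    have hA : Continuous fun q : ↥circleS × ℝ => X0 u q.1.1.1 q.2 := by fun_prop
    have hk2 := cont_k (u := u) hu hu1
    have hK : Continuous fun q : ↥circleS × ℝ => km u (X0 u q.1.1.1 q.2) q.2 := by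
      fun_prop
    have hB : Continuous fun q : ↥circleS × ℝ =>
        q.1.1.2 / km u (X0 u q.1.1.1 q.2) q.2 :=
      Continuous.div (by fun_prop) hK (fun q => (km_pos hu hu1 _ _).ne')
    exact hA.prodMk (hB.prodMk continuous_snd)
end
end

section
/- Let g(x,u,v) = (u²x+1)(vx−1)(x² + (v−u²)x + 1) and, for u ∈ (0,1], let g_u(x,z) = g(x, u, (z²+u²)/((u²+1)(z²+1))), X_u = {(x,y,z) ∈ ℝ³ : y² + g_u(x,z) = 0}, and q_u: X_u → ℝ defined by q_u(x,y,z) = z. Then for every u with 0 < u ≤ 1: (a) q_u is a proper map; (b) q_u is surjective; (c) at every point (x,y,z) ∈ X_u the total derivative of the map Ψ_u: ℝ³ → ℝ², Ψ_u(x,y,z) = (y² + g_u(x,z), z), is surjective; and (d) the fiber q_u^{-1}(0) = {(x,y,0) : y² + g_u(x,0) = 0} is homeomorphic to the circle S¹. -/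
noncomputable section

/-- The map `q_u : X_u → ℝ`, `q_u(x,y,z) = z`. -/
def qu (u : ℝ) : ↥(Xu u) → ℝ := fun w => w.1.2.2

/-- The map `Ψ_u : ℝ³ → ℝ²`, `Ψ_u(x,y,z) = (y² + g_u(x,z), z)`. -/
def Ψu (u : ℝ) : ℝ × ℝ × ℝ → ℝ × ℝ :=
  fun w => (w.2.1 ^ 2 + gu u w.1 w.2.2, w.2.2)

namespace Claim3

def V (u z : ℝ) : ℝ := (z ^ 2 + u ^ 2) / ((u ^ 2 + 1) * (z ^ 2 + 1))

variable {u : ℝ}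

lemma gu_eq (u x z : ℝ) : gu u x z = g x u (V u z) := rfl

lemma V_pos (hu : 0 < u) (z : ℝ) : 0 < V u z :=
  div_pos (by positivity) (by positivity)

lemma V_lb (hu : 0 < u) (hu1 : u ≤ 1) (z : ℝ) : u ^ 2 / (u ^ 2 + 1) ≤ V u z := by
  rw [V, div_le_div_iff₀ (by positivity) (by positivity)]
  nlinarith [sq_nonneg z, sq_nonneg u, mul_nonneg (sq_nonneg z) (sub_nonneg.mpr (show u^2 ≤ 1 by nlinarith))]

lemma V_lt_one (hu : 0 < u) (hu1 : u ≤ 1) (z : ℝ) : V u z < 1 := by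
  rw [V, div_lt_one (by positivity)]
  nlinarith [sq_nonneg z, sq_nonneg (u * z)]

lemma Q_pos (hu : 0 < u) (hu1 : u ≤ 1) {v : ℝ} (x : ℝ) (hv0 : 0 < v) (hv1 : v < 1) :
    0 < x ^ 2 + (v - u ^ 2) * x + 1 := by
  have hc1 : v - u ^ 2 < 1 := by nlinarith
  have hc2 : -1 < v - u ^ 2 := by nlinarith
  have hsq : (v - u ^ 2) ^ 2 < 1 := by nlinarith
  nlinarith [sq_nonneg (2 * x + (v - u ^ 2))]

lemma factor_bounds (hu : 0 < u) (hu1 : u ≤ 1) {v x : ℝ} (hv0 : 0 < v) (hv1 : v < 1)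
    (hg : g x u v ≤ 0) : 0 ≤ u ^ 2 * x + 1 ∧ v * x ≤ 1 := by
  have hQ := Q_pos hu hu1 x hv0 hv1
  unfold g at hg
  have hAB : (u ^ 2 * x + 1) * (v * x - 1) ≤ 0 := by
    by_contra h
    push_neg at h
    nlinarith [mul_pos h hQ]
  constructor
  · by_contra h
    push_neg at h
    have hx : x < 0 := by nlinarith
    have hB : v * x - 1 < 0 := by nlinarith
    nlinarith [mul_pos_of_neg_of_neg h hB]
  · by_contra h
    push_neg at h
    have hx : 0 < x := by nlinarith
    have hA : 0 < u ^ 2 * x + 1 := by positivity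
    nlinarith [mul_pos hA (show (0:ℝ) < v * x - 1 by linarith)]

lemma xbound (hu : 0 < u) (hu1 : u ≤ 1) {x z : ℝ} (hg : gu u x z ≤ 0) :
    -((u ^ 2 + 1) / u ^ 2) ≤ x ∧ x ≤ (u ^ 2 + 1) / u ^ 2 := by
  rw [gu_eq] at hg
  obtain ⟨h1, h2⟩ := factor_bounds hu hu1 (V_pos hu z) (V_lt_one hu hu1 z) hg
  have hu2 : (0:ℝ) < u ^ 2 := by positivity
  constructor
  · rw [neg_le, le_div_iff₀ hu2]
    nlinarith
  · rcases le_or_gt x 0 with hx | hx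
    · exact hx.trans (by positivity)
    · rw [le_div_iff₀ hu2]
      have hlb := V_lb hu hu1 z
      have h3 : u ^ 2 / (u ^ 2 + 1) * x ≤ 1 :=
        le_trans (mul_le_mul_of_nonneg_right hlb hx.le) h2
      rw [div_mul_eq_mul_div, div_le_one (by positivity)] at h3
      nlinarith

def Ybnd (u : ℝ) : ℝ :=
  (u ^ 2 + 2) * ((1 + (u ^ 2 + 1) / u ^ 2) * (((u ^ 2 + 1) / u ^ 2) ^ 2 + (u ^ 2 + 1) / u ^ 2 + 1))

lemma ybound (hu : 0 < u) (hu1 : u ≤ 1) {x y z : ℝ} (hmem : y ^ 2 + gu u x z = 0) :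
    y ^ 2 ≤ Ybnd u := by
  have hu2 : (0:ℝ) < u ^ 2 := by positivity
  set M : ℝ := (u ^ 2 + 1) / u ^ 2 with hM
  have hMpos : 0 < M := by positivity
  have hM1 : 1 ≤ M := by rw [hM, le_div_iff₀ hu2]; nlinarith
  have hg : gu u x z ≤ 0 := by nlinarith [sq_nonneg y]
  obtain ⟨hx1, hx2⟩ := xbound hu hu1 hg
  set v : ℝ := V u z with hv
  have hv0 : 0 < v := V_pos hu z
  have hv1 : v < 1 := V_lt_one hu hu1 z
  have hgf : g x u v ≤ 0 := by rw [gu_eq] at hg; exact hg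
  obtain ⟨hA, hB⟩ := factor_bounds hu hu1 hv0 hv1 hgf
  have hy : y ^ 2 = (u ^ 2 * x + 1) * ((1 - v * x) * (x ^ 2 + (v - u ^ 2) * x + 1)) := by
    have h := hmem
    rw [gu_eq] at h
    unfold g at h
    linear_combination h
  have huM : u ^ 2 * M = u ^ 2 + 1 := by rw [hM, mul_comm, div_mul_cancel₀ _ (ne_of_gt hu2)]
  have hA' : u ^ 2 * x + 1 ≤ u ^ 2 + 2 := by nlinarith [mul_le_mul_of_nonneg_left hx2 hu2.le]
  have hB0 : 0 ≤ 1 - v * x := by linarith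
  have hB' : 1 - v * x ≤ 1 + M := by
    nlinarith [mul_le_mul_of_nonneg_left hx1 hv0.le, mul_le_mul_of_nonneg_right hv1.le hMpos.le]
  have hQ0 := Q_pos hu hu1 x hv0 hv1
  have hQ' : x ^ 2 + (v - u ^ 2) * x + 1 ≤ M ^ 2 + M + 1 := by
    have hc1 : v - u ^ 2 < 1 := by nlinarith
    have hc2 : -1 < v - u ^ 2 := by nlinarith
    nlinarith [mul_nonneg (show (0:ℝ) ≤ 1 - (v - u^2) by linarith) (show (0:ℝ) ≤ M + x by linarith),
      mul_nonneg (show (0:ℝ) ≤ 1 + (v - u^2) by linarith) (show (0:ℝ) ≤ M - x by linarith),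
      mul_nonneg (show (0:ℝ) ≤ M - x by linarith) (show (0:ℝ) ≤ M + x by linarith)]
  have h1 : (1 - v * x) * (x ^ 2 + (v - u ^ 2) * x + 1) ≤ (1 + M) * (M ^ 2 + M + 1) :=
    mul_le_mul hB' hQ' hQ0.le (by linarith)
  have h2 : 0 ≤ (1 - v * x) * (x ^ 2 + (v - u ^ 2) * x + 1) := mul_nonneg hB0 hQ0.le
  rw [hy, Ybnd]
  exact mul_le_mul hA' h1 h2 (by nlinarith)

end Claim3
namespace Claim3
variable {u : ℝ}

lemma contV : Continuous (V u) := by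
  apply Continuous.div (by fun_prop) (by fun_prop)
  intro z
  positivity

lemma contGu : Continuous (fun w : ℝ × ℝ × ℝ => gu u w.1 w.2.2) := by
  have h1 : Continuous fun w : ℝ × ℝ × ℝ => V u w.2.2 := contV.comp (continuous_snd.snd)
  have h2 : Continuous fun p : ℝ × ℝ => g p.1 u p.2 := by unfold g; fun_prop
  exact h2.comp (continuous_fst.prodMk h1)

lemma contF : Continuous (fun w : ℝ × ℝ × ℝ => w.2.1 ^ 2 + gu u w.1 w.2.2) :=
  ((continuous_snd.fst.pow 2).add contGu)

lemma isClosed_Xu : IsClosed (Xu u) := isClosed_eq contF continuous_const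

lemma compact_slice (hu : 0 < u) (hu1 : u ≤ 1) {K : Set ℝ} (hK : IsCompact K) :
    IsCompact (Xu u ∩ {w : ℝ × ℝ × ℝ | w.2.2 ∈ K}) := by
  set M : ℝ := (u ^ 2 + 1) / u ^ 2 with hM
  have hbox : IsCompact ((Set.Icc (-M) M) ×ˢ ((Set.Icc (-(Ybnd u + 1)) (Ybnd u + 1)) ×ˢ K)) :=
    isCompact_Icc.prod (isCompact_Icc.prod hK)
  apply hbox.of_isClosed_subset
  · exact isClosed_Xu.inter (hK.isClosed.preimage (continuous_snd.snd))
  · rintro ⟨x, y, z⟩ ⟨hw, hk⟩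
    have hmem : y ^ 2 + gu u x z = 0 := hw
    have hg : gu u x z ≤ 0 := by nlinarith [sq_nonneg y]
    obtain ⟨hx1, hx2⟩ := xbound hu hu1 hg
    have hy := ybound hu hu1 hmem
    have hY0 : 0 ≤ Ybnd u := le_trans (sq_nonneg y) hy
    refine ⟨⟨hx1, hx2⟩, ⟨?_, ?_⟩, hk⟩
    · nlinarith [sq_nonneg (y + 1)]
    · nlinarith [sq_nonneg (y - 1)]

lemma qu_preimage (K : Set ℝ) :
    qu u ⁻¹' K = Subtype.val ⁻¹' (Xu u ∩ {w : ℝ × ℝ × ℝ | w.2.2 ∈ K}) := by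
  ext ⟨w, hw⟩
  simp [qu, hw]

lemma part_a (hu : 0 < u) (hu1 : u ≤ 1) :
    Continuous (qu u) ∧ ∀ K : Set ℝ, IsCompact K → IsCompact (qu u ⁻¹' K) := by
  constructor
  · exact (continuous_subtype_val.snd).snd
  · intro K hK
    rw [qu_preimage]
    exact (isClosed_Xu.isClosedEmbedding_subtypeVal).isCompact_preimage (compact_slice hu hu1 hK)

lemma part_b : Function.Surjective (qu u) := by
  intro z
  refine ⟨⟨(0, 1, z), ?_⟩, rfl⟩
  show (1:ℝ) ^ 2 + gu u 0 z = 0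
  rw [gu_eq]
  unfold g
  ring

end Claim3
namespace Claim3
variable {u : ℝ}

lemma diffV (hu : 0 < u) : Differentiable ℝ (V u) := fun z =>
  DifferentiableAt.div (by fun_prop) (by fun_prop) (by positivity)

lemma diffF (hu : 0 < u) :
    Differentiable ℝ (fun w : ℝ × ℝ × ℝ => w.2.1 ^ 2 + gu u w.1 w.2.2) := by
  have h1 : Differentiable ℝ fun w : ℝ × ℝ × ℝ => V u w.2.2 :=
    (diffV hu).comp (differentiable_snd.snd)
  have h2 : Differentiable ℝ fun p : ℝ × ℝ => g p.1 u p.2 := by unfold g; fun_prop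
  have h3 : Differentiable ℝ fun w : ℝ × ℝ × ℝ => g w.1 u (V u w.2.2) :=
    h2.comp (differentiable_fst.prodMk h1)
  exact ((differentiable_snd.fst.pow 2).add h3)

lemma diffΨ (hu : 0 < u) : Differentiable ℝ (Ψu u) := by
  unfold Ψu
  exact (diffF hu).prodMk (differentiable_snd.snd)

lemma fderiv_dir {f : ℝ × ℝ × ℝ → ℝ × ℝ} {w e : ℝ × ℝ × ℝ} {d : ℝ × ℝ}
    (hf : DifferentiableAt ℝ f w) (h : HasDerivAt (fun t : ℝ => f (w + t • e)) d 0) :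
    fderiv ℝ f w e = d := by
  have hγ : HasDerivAt (fun t : ℝ => w + t • e) e 0 := by
    simpa using ((hasDerivAt_id (0 : ℝ)).smul_const e).const_add w
  have h0 : HasFDerivAt f (fderiv ℝ f w) ((fun t : ℝ => w + t • e) 0) := by
    simpa using hf.hasFDerivAt
  exact (h0.comp_hasDerivAt 0 hγ).unique h

lemma part_c (hu : 0 < u) (hu1 : u ≤ 1) :
    ∀ w ∈ Xu u, Function.Surjective (fderiv ℝ (Ψu u) w) := by
  rintro ⟨x, y, z⟩ hw
  have hmem : y ^ 2 + gu u x z = 0 := hw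
  set v : ℝ := V u z with hv
  have hv0 : 0 < v := V_pos hu z
  have hv1 : v < 1 := V_lt_one hu hu1 z
  have hdiff : DifferentiableAt ℝ (Ψu u) (x, y, z) := diffΨ hu _
  -- direction (0,1,0)
  have he2 : fderiv ℝ (Ψu u) (x, y, z) ((0:ℝ), (1:ℝ), (0:ℝ)) = (2 * y, 0) := by
    apply fderiv_dir hdiff
    have hfun : (fun t : ℝ => Ψu u ((x, y, z) + t • ((0:ℝ), (1:ℝ), (0:ℝ)))) =
        fun t : ℝ => ((y + t) ^ 2 + gu u x z, z) := by
      funext t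
      simp [Ψu, Prod.smul_mk, Prod.mk_add_mk, smul_eq_mul]
    rw [hfun]
    have h1 : HasDerivAt (fun t : ℝ => (y + t) ^ 2 + gu u x z) (2 * y) 0 := by
      have h := (((hasDerivAt_id (0 : ℝ)).const_add y).pow 2).add_const (gu u x z)
      simpa using h
    exact h1.prodMk (hasDerivAt_const 0 z)
  -- direction (0,0,1)
  set c : ℝ := deriv (fun s : ℝ => y ^ 2 + gu u x s) z with hc
  have hφ : DifferentiableAt ℝ (fun s : ℝ => y ^ 2 + gu u x s) z := by
    have hcurve : DifferentiableAt ℝ (fun s : ℝ => ((x, y, s) : ℝ × ℝ × ℝ)) z := by fun_prop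
    have h := DifferentiableAt.comp (𝕜 := ℝ)
      (g := fun w : ℝ × ℝ × ℝ => w.2.1 ^ 2 + gu u w.1 w.2.2)
      (f := fun s : ℝ => ((x, y, s) : ℝ × ℝ × ℝ)) z (diffF hu (x, y, z)) hcurve
    exact h
  have he3 : fderiv ℝ (Ψu u) (x, y, z) ((0:ℝ), (0:ℝ), (1:ℝ)) = (c, 1) := by
    apply fderiv_dir hdiff
    have hfun : (fun t : ℝ => Ψu u ((x, y, z) + t • ((0:ℝ), (0:ℝ), (1:ℝ)))) =
        fun t : ℝ => (y ^ 2 + gu u x (z + t), z + t) := by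
      funext t
      simp [Ψu, Prod.smul_mk, Prod.mk_add_mk, smul_eq_mul]
    rw [hfun]
    have hinner : HasDerivAt (fun t : ℝ => z + t) 1 0 := by
      simpa using (hasDerivAt_id (0 : ℝ)).const_add z
    refine HasDerivAt.prodMk ?_ hinner
    have hz0 : HasDerivAt (fun s : ℝ => y ^ 2 + gu u x s) c (z + 0) := by
      rw [add_zero]
      have h := hφ.hasDerivAt
      rw [← hc] at h
      exact h
    rw [← mul_one c]
    exact hz0.comp 0 hinner
  -- direction (1,0,0)
  set gx : ℝ := u ^ 2 * ((v * x - 1) * (x ^ 2 + (v - u ^ 2) * x + 1)) +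
      v * ((u ^ 2 * x + 1) * (x ^ 2 + (v - u ^ 2) * x + 1)) +
      (u ^ 2 * x + 1) * (v * x - 1) * (2 * x + (v - u ^ 2)) with hgx
  have he1 : fderiv ℝ (Ψu u) (x, y, z) ((1:ℝ), (0:ℝ), (0:ℝ)) = (gx, 0) := by
    apply fderiv_dir hdiff
    have hfun : (fun t : ℝ => Ψu u ((x, y, z) + t • ((1:ℝ), (0:ℝ), (0:ℝ)))) =
        fun t : ℝ => (y ^ 2 + g (x + t) u v, z) := by
      funext t
      simp [Ψu, gu_eq, Prod.smul_mk, Prod.mk_add_mk, smul_eq_mul, ← hv]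
    rw [hfun]
    refine HasDerivAt.prodMk ?_ (hasDerivAt_const 0 z)
    have hA : HasDerivAt (fun t : ℝ => u ^ 2 * (x + t) + 1) (u ^ 2) 0 := by
      simpa using (((hasDerivAt_id (0 : ℝ)).const_add x).const_mul (u ^ 2)).add_const 1
    have hB : HasDerivAt (fun t : ℝ => v * (x + t) - 1) v 0 := by
      simpa using (((hasDerivAt_id (0 : ℝ)).const_add x).const_mul v).sub_const 1
    have hQ' : HasDerivAt (fun t : ℝ => (x + t) ^ 2 + (v - u ^ 2) * (x + t) + 1)
        (2 * x + (v - u ^ 2)) 0 := by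
      have h := ((((hasDerivAt_id (0 : ℝ)).const_add x).pow 2).add
        (((hasDerivAt_id (0 : ℝ)).const_add x).const_mul (v - u ^ 2))).add_const 1
      refine h.congr_deriv ?_
      norm_num
    have h := ((hA.mul hB).mul hQ').const_add (y ^ 2)
    have heq : (fun t : ℝ => y ^ 2 + g (x + t) u v) =
        fun t : ℝ => y ^ 2 + (u ^ 2 * (x + t) + 1) * (v * (x + t) - 1) *
          ((x + t) ^ 2 + (v - u ^ 2) * (x + t) + 1) := by
      funext t
      unfold g
      rfl
    rw [heq]
    convert h using 1
    · rfl
    rw [hgx]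
    simp only [Pi.mul_apply]
    ring
  -- nondegeneracy
  have hkey : (2 * y ≠ 0 ∧ fderiv ℝ (Ψu u) (x, y, z) ((0:ℝ),(1:ℝ),(0:ℝ)) = (2*y, 0)) ∨
      (gx ≠ 0 ∧ fderiv ℝ (Ψu u) (x, y, z) ((1:ℝ),(0:ℝ),(0:ℝ)) = (gx, 0)) := by
    by_cases hy : y = 0
    · right
      refine ⟨?_, he1⟩
      have hg0 : g x u v = 0 := by
        have h := hmem
        rw [hy, gu_eq, ← hv] at h
        linarith [h]
      have hQ0 : 0 < x ^ 2 + (v - u ^ 2) * x + 1 := Q_pos hu hu1 x hv0 hv1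
      have hAB : (u ^ 2 * x + 1) * (v * x - 1) = 0 := by
        unfold g at hg0
        exact (mul_eq_zero.mp hg0).resolve_right hQ0.ne'
      rcases mul_eq_zero.mp hAB with hA0 | hB0
      · have hxneg : x < 0 := by nlinarith
        have hBneg : v * x - 1 < 0 := by nlinarith
        have hval : gx = u ^ 2 * ((v * x - 1) * (x ^ 2 + (v - u ^ 2) * x + 1)) := by
          rw [hgx, hA0]; ring
        rw [hval]
        exact (mul_neg_of_pos_of_neg (by positivity) (mul_neg_of_neg_of_pos hBneg hQ0)).ne
      · have hxpos : 0 < x := by nlinarith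
        have hval : gx = v * ((u ^ 2 * x + 1) * (x ^ 2 + (v - u ^ 2) * x + 1)) := by
          rw [hgx, hB0]; ring
        rw [hval]
        have : 0 < v * ((u ^ 2 * x + 1) * (x ^ 2 + (v - u ^ 2) * x + 1)) := by positivity
        exact this.ne'
    · exact Or.inl ⟨mul_ne_zero two_ne_zero hy, he2⟩
  -- conclude surjectivity
  obtain ⟨α, e, hα, he⟩ : ∃ (α : ℝ) (e : ℝ × ℝ × ℝ), α ≠ 0 ∧
      fderiv ℝ (Ψu u) (x, y, z) e = (α, 0) := by
    rcases hkey with ⟨h1, h2⟩ | ⟨h1, h2⟩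
    · exact ⟨2 * y, _, h1, h2⟩
    · exact ⟨gx, _, h1, h2⟩
  intro p
  refine ⟨p.2 • ((0:ℝ), (0:ℝ), (1:ℝ)) + ((p.1 - p.2 * c) / α) • e, ?_⟩
  rw [map_add, map_smul, map_smul, he3, he]
  have hp : p = (p.1, p.2) := rfl
  rw [hp, Prod.smul_mk, Prod.smul_mk, Prod.mk_add_mk]
  refine Prod.ext ?_ ?_
  · show p.2 * c + (p.1 - p.2 * c) / α * α = p.1
    field_simp
    ring
  · show p.2 * 1 + (p.1 - p.2 * c) / α * 0 = p.2
    ring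

end Claim3
namespace Claim3
variable {u : ℝ}

def v₀ (u : ℝ) : ℝ := u ^ 2 / (u ^ 2 + 1)
def aa (u : ℝ) : ℝ := -(1 / u ^ 2)
def bb (u : ℝ) : ℝ := (u ^ 2 + 1) / u ^ 2
def hh (u x : ℝ) : ℝ := -(gu u x 0)
def cc (u x : ℝ) : ℝ := (2 * x - (aa u + bb u)) / (bb u - aa u)
def kk (u x : ℝ) : ℝ := Real.sqrt ((1 - cc u x ^ 2) / hh u x)
def XX (u p : ℝ) : ℝ := ((bb u - aa u) * p + (aa u + bb u)) / 2
def mm (u p : ℝ) : ℝ := Real.sqrt (hh u (XX u p) / (1 - p ^ 2))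

lemma hV0 : V u 0 = v₀ u := by unfold V v₀; norm_num

lemma hcont_h (hu : 0 < u) : Continuous (hh u) := by
  unfold hh
  simp only [gu_eq]
  unfold g
  fun_prop

set_option maxHeartbeats 2000000 in
lemma part_d (hu : 0 < u) (hu1 : u ≤ 1) :
    Nonempty (↥{w : ℝ × ℝ × ℝ | w ∈ Xu u ∧ w.2.2 = 0} ≃ₜ ↥circleS) := by
  have hu2 : (0:ℝ) < u ^ 2 := by positivity
  have hv0pos : 0 < v₀ u := by unfold v₀; positivity
  have hv0lt : v₀ u < 1 := by
    unfold v₀; rw [div_lt_one (by positivity)]; nlinarith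
  have hbbpos : 0 < bb u := by unfold bb; positivity
  have haaneg : aa u < 0 := by unfold aa; simp; positivity
  have hab : aa u < bb u := haaneg.trans hbbpos
  have hba : 0 < bb u - aa u := sub_pos.mpr hab
  have hvb : v₀ u * bb u = 1 := by unfold v₀ bb; field_simp
  have hua : u ^ 2 * aa u + 1 = 0 := by unfold aa; field_simp; ring
  have h_eq : ∀ x, hh u x =
      (u ^ 2 * x + 1) * ((1 - v₀ u * x) * (x ^ 2 + (v₀ u - u ^ 2) * x + 1)) := by
    intro x
    unfold hh
    rw [gu_eq, hV0]
    unfold g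
    ring
  have h_aa : hh u (aa u) = 0 := by rw [h_eq, hua, zero_mul]
  have h_bb : hh u (bb u) = 0 := by
    rw [h_eq]
    have hz : 1 - v₀ u * bb u = 0 := by rw [hvb]; ring
    rw [hz]; ring
  have hrange : ∀ x, 0 ≤ hh u x → aa u ≤ x ∧ x ≤ bb u := by
    intro x hx
    have hg : g x u (v₀ u) ≤ 0 := by
      have h' : hh u x = -(g x u (v₀ u)) := by unfold hh; rw [gu_eq, hV0]
      linarith [hx, h']
    obtain ⟨h1, h2⟩ := factor_bounds hu hu1 hv0pos hv0lt hg
    constructor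
    · by_contra hcon; push_neg at hcon
      nlinarith [mul_lt_mul_of_pos_left hcon hu2]
    · by_contra hcon; push_neg at hcon
      nlinarith [mul_lt_mul_of_pos_left hcon hv0pos]
  have hinter : ∀ x, aa u < x → x < bb u → 0 < hh u x := by
    intro x h1 h2
    rw [h_eq]
    have hA : 0 < u ^ 2 * x + 1 := by nlinarith [mul_lt_mul_of_pos_left h1 hu2]
    have hB : 0 < 1 - v₀ u * x := by nlinarith [mul_lt_mul_of_pos_left h2 hv0pos]
    exact mul_pos hA (mul_pos hB (Q_pos hu hu1 x hv0pos hv0lt))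
  have hccaa : cc u (aa u) = -1 := by unfold cc; rw [div_eq_iff hba.ne']; ring
  have hccbb : cc u (bb u) = 1 := by unfold cc; rw [div_eq_iff hba.ne']; ring
  have hXc : ∀ x, XX u (cc u x) = x := by
    intro x; unfold XX cc; field_simp; ring
  have hcX : ∀ p, cc u (XX u p) = p := by
    intro p; unfold cc XX; rw [div_eq_iff hba.ne']; ring
  have hcsq : ∀ x, aa u ≤ x → x ≤ bb u → cc u x ^ 2 ≤ 1 := by
    intro x h1 h2
    have hle : -1 ≤ cc u x := by
      unfold cc; rw [le_div_iff₀ hba]; linarith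
    have hge : cc u x ≤ 1 := by
      unfold cc; rw [div_le_one hba]; linarith
    nlinarith
  have hcstrict : ∀ x, aa u < x → x < bb u → cc u x ^ 2 < 1 := by
    intro x h1 h2
    have hle : -1 < cc u x := by
      unfold cc; rw [lt_div_iff₀ hba]; linarith
    have hge : cc u x < 1 := by
      unfold cc; rw [div_lt_one hba]; linarith
    nlinarith
  have hXmono : ∀ p, -1 < p → p < 1 → aa u < XX u p ∧ XX u p < bb u := by
    intro p h1 h2
    constructor
    · unfold XX; rw [lt_div_iff₀ (by norm_num : (0:ℝ) < 2)]
      nlinarith [mul_lt_mul_of_pos_left h1 hba]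
    · unfold XX; rw [div_lt_iff₀ (by norm_num : (0:ℝ) < 2)]
      nlinarith [mul_lt_mul_of_pos_left h2 hba]
  have hXaa : XX u (-1) = aa u := by unfold XX; field_simp; ring
  have hXbb : XX u 1 = bb u := by unfold XX; field_simp; ring
  -- the fiber
  set E : Set (ℝ × ℝ × ℝ) := {w | w ∈ Xu u ∧ w.2.2 = 0} with hE
  have hEmem : ∀ w : ℝ × ℝ × ℝ, w ∈ E ↔ w.2.1 ^ 2 = hh u w.1 ∧ w.2.2 = 0 := by
    intro w
    constructor
    · rintro ⟨h1, h2⟩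
      have h1' : w.2.1 ^ 2 + gu u w.1 w.2.2 = 0 := h1
      rw [h2] at h1'
      exact ⟨by unfold hh; linarith, h2⟩
    · rintro ⟨h1, h2⟩
      refine ⟨?_, h2⟩
      show w.2.1 ^ 2 + gu u w.1 w.2.2 = 0
      rw [h2]
      unfold hh at h1
      linarith
  -- trichotomies
  have htriE : ∀ w : ℝ × ℝ × ℝ, w ∈ E →
      (w.1 = aa u ∧ w.2.1 = 0) ∨ (w.1 = bb u ∧ w.2.1 = 0) ∨ (aa u < w.1 ∧ w.1 < bb u) := by
    intro w hw
    obtain ⟨hy, hz⟩ := (hEmem w).mp hw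
    obtain ⟨h1, h2⟩ := hrange w.1 (hy ▸ sq_nonneg w.2.1)
    rcases eq_or_lt_of_le h1 with he | he
    · left
      refine ⟨he.symm, ?_⟩
      have h0 : w.2.1 ^ 2 = 0 := by rw [hy, ← he, h_aa]
      exact pow_eq_zero_iff (by norm_num) |>.mp h0
    · rcases eq_or_lt_of_le h2 with he' | he'
      · right; left
        refine ⟨he', ?_⟩
        have h0 : w.2.1 ^ 2 = 0 := by rw [hy, he', h_bb]
        exact pow_eq_zero_iff (by norm_num) |>.mp h0
      · right; right; exact ⟨he, he'⟩
  have htriC : ∀ p : ℝ × ℝ, p ∈ circleS →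
      (p.1 = -1 ∧ p.2 = 0) ∨ (p.1 = 1 ∧ p.2 = 0) ∨ (-1 < p.1 ∧ p.1 < 1) := by
    intro p hp
    have hp' : p.1 ^ 2 + p.2 ^ 2 = 1 := hp
    have h1 : -1 ≤ p.1 := by nlinarith [sq_nonneg p.2]
    have h2 : p.1 ≤ 1 := by nlinarith [sq_nonneg p.2]
    rcases eq_or_lt_of_le h1 with he | he
    · left
      refine ⟨he.symm, ?_⟩
      have h0 : p.2 ^ 2 = 0 := by nlinarith
      exact pow_eq_zero_iff (by norm_num) |>.mp h0
    · rcases eq_or_lt_of_le h2 with he' | he'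
      · right; left
        refine ⟨he', ?_⟩
        have h0 : p.2 ^ 2 = 0 := by nlinarith
        exact pow_eq_zero_iff (by norm_num) |>.mp h0
      · right; right; exact ⟨he, he'⟩
  -- kk squared on interior
  have hkk2 : ∀ x, aa u < x → x < bb u → kk u x ^ 2 = (1 - cc u x ^ 2) / hh u x := by
    intro x h1 h2
    have hnum : (0:ℝ) ≤ 1 - cc u x ^ 2 := by nlinarith [hcstrict x h1 h2]
    unfold kk
    exact Real.sq_sqrt (div_nonneg hnum (hinter x h1 h2).le)
  have hmm2 : ∀ p, -1 < p → p < 1 → mm u p ^ 2 = hh u (XX u p) / (1 - p ^ 2) := by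
    intro p h1 h2
    obtain ⟨ha', hb'⟩ := hXmono p h1 h2
    have hnum : (0:ℝ) ≤ 1 - p ^ 2 := by nlinarith
    unfold mm
    exact Real.sq_sqrt (div_nonneg (hinter _ ha' hb').le hnum)
  -- forward membership
  have hsq : ∀ w : ℝ × ℝ × ℝ, w ∈ E → cc u w.1 ^ 2 + (w.2.1 * kk u w.1) ^ 2 = 1 := by
    intro w hw
    obtain ⟨hy, hz⟩ := (hEmem w).mp hw
    rcases htriE w hw with ⟨hx, hy0⟩ | ⟨hx, hy0⟩ | ⟨h1, h2⟩
    · rw [hx, hy0, hccaa]; ring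
    · rw [hx, hy0, hccbb]; ring
    · rw [mul_pow, hkk2 w.1 h1 h2, hy, mul_comm (hh u w.1),
        div_mul_cancel₀ _ (hinter w.1 h1 h2).ne']
      ring
  -- inverse membership
  have hsq' : ∀ p : ℝ × ℝ, p ∈ circleS → (p.2 * mm u p.1) ^ 2 = hh u (XX u p.1) := by
    intro p hp
    have hp' : p.1 ^ 2 + p.2 ^ 2 = 1 := hp
    rcases htriC p hp with ⟨hx, hy0⟩ | ⟨hx, hy0⟩ | ⟨h1, h2⟩
    · rw [hx, hy0, hXaa, h_aa]; ring
    · rw [hx, hy0, hXbb, h_bb]; ring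
    · rw [mul_pow, hmm2 p.1 h1 h2]
      have hs : p.2 ^ 2 = 1 - p.1 ^ 2 := by linarith
      have hne : (1:ℝ) - p.1 ^ 2 ≠ 0 := (by nlinarith : (0:ℝ) < 1 - p.1 ^ 2).ne'
      rw [hs, mul_comm, div_mul_cancel₀ _ hne]
  -- products kk * mm = 1 on interior
  have hkm : ∀ x, aa u < x → x < bb u → kk u x * mm u (cc u x) = 1 := by
    intro x h1 h2
    have hnum : (0:ℝ) < 1 - cc u x ^ 2 := by nlinarith [hcstrict x h1 h2]
    unfold kk mm
    rw [hXc]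
    rw [← Real.sqrt_mul (div_nonneg hnum.le (hinter x h1 h2).le)]
    rw [div_mul_div_comm, mul_comm (1 - cc u x ^ 2), div_self
      (mul_pos (hinter x h1 h2)
        hnum).ne', Real.sqrt_one]
  have hmk : ∀ p, -1 < p → p < 1 → mm u p * kk u (XX u p) = 1 := by
    intro p h1 h2
    obtain ⟨ha', hb'⟩ := hXmono p h1 h2
    have hnum : (0:ℝ) < 1 - p ^ 2 := by nlinarith
    unfold kk mm
    rw [hcX]
    rw [← Real.sqrt_mul (div_nonneg (hinter _ ha' hb').le hnum.le)]
    rw [div_mul_div_comm, mul_comm (hh u (XX u p)), div_self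
      (mul_pos hnum (hinter _ ha' hb')).ne', Real.sqrt_one]
  -- the equivalence
  let eqv : ↥E ≃ ↥circleS :=
    { toFun := fun w => ⟨(cc u w.1.1, w.1.2.1 * kk u w.1.1), hsq w.1 w.2⟩
      invFun := fun p => ⟨(XX u p.1.1, p.1.2 * mm u p.1.1, 0),
        (hEmem _).mpr ⟨hsq' p.1 p.2, rfl⟩⟩
      left_inv := by
        rintro ⟨⟨x, y, z⟩, hw⟩
        apply Subtype.ext
        have hz : z = 0 := hw.2
        refine Prod.ext ?_ (Prod.ext ?_ ?_)
        · exact hXc x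
        · show y * kk u x * mm u (cc u x) = y
          rcases htriE _ hw with ⟨hx, hy0⟩ | ⟨hx, hy0⟩ | ⟨h1, h2⟩
          · have hy' : y = 0 := hy0
            rw [hy']; ring
          · have hy' : y = 0 := hy0
            rw [hy']; ring
          · rw [mul_assoc, hkm x h1 h2, mul_one]
        · exact hz.symm
      right_inv := by
        rintro ⟨⟨p, s⟩, hp⟩
        apply Subtype.ext
        refine Prod.ext ?_ ?_
        · exact hcX p
        · show s * mm u p * kk u (XX u p) = s
          rcases htriC _ hp with ⟨hx, hy0⟩ | ⟨hx, hy0⟩ | ⟨h1, h2⟩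
          · have hs' : s = 0 := hy0
            rw [hs']; ring
          · have hs' : s = 0 := hy0
            rw [hs']; ring
          · rw [mul_assoc, hmk p h1 h2, mul_one] }
  -- compactness of E
  have hEcompact : IsCompact E := by
    have heq : E = Xu u ∩ {w : ℝ × ℝ × ℝ | w.2.2 ∈ ({0} : Set ℝ)} := by
      ext w; simp [hE, Set.mem_inter_iff]
    rw [heq]
    exact compact_slice hu hu1 isCompact_singleton
  haveI : CompactSpace ↥E := isCompact_iff_compactSpace.mp hEcompact
  -- continuity of the forward map
  have hccont : Continuous fun x : ℝ => cc u x := by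
    unfold cc; fun_prop
  have hFcont : ContinuousOn (fun w : ℝ × ℝ × ℝ => (cc u w.1, w.2.1 * kk u w.1)) E := by
    apply ContinuousOn.prodMk
    · exact (hccont.comp continuous_fst).continuousOn
    · intro w₀ hw₀
      rcases htriE _ hw₀ with ⟨hx, hy0⟩ | ⟨hx, hy0⟩ | ⟨h1, h2⟩
      -- endpoint cases: squeeze
      · unfold ContinuousWithinAt
        simp only [hy0, zero_mul]
        apply squeeze_zero_norm'
        · apply eventually_nhdsWithin_of_forall
          intro w hw
          have := hsq w hw
          have habs : ‖w.2.1 * kk u w.1‖ = Real.sqrt (1 - cc u w.1 ^ 2) := by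
            rw [Real.norm_eq_abs, ← Real.sqrt_sq_eq_abs]
            congr 1
            linarith
          rw [habs]
        · have hg : Continuous fun w : ℝ × ℝ × ℝ => Real.sqrt (1 - cc u w.1 ^ 2) := by
            apply Real.continuous_sqrt.comp
            fun_prop
          have hg0 : Real.sqrt (1 - cc u w₀.1 ^ 2) = 0 := by
            rw [hx, hccaa]; norm_num
          have h2 : Filter.Tendsto (fun w : ℝ × ℝ × ℝ => Real.sqrt (1 - cc u w.1 ^ 2))
              (nhdsWithin w₀ E) (nhds (Real.sqrt (1 - cc u w₀.1 ^ 2))) :=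
            (hg.tendsto w₀).mono_left nhdsWithin_le_nhds
          rwa [hg0] at h2
      · unfold ContinuousWithinAt
        simp only [hy0, zero_mul]
        apply squeeze_zero_norm'
        · apply eventually_nhdsWithin_of_forall
          intro w hw
          have := hsq w hw
          have habs : ‖w.2.1 * kk u w.1‖ = Real.sqrt (1 - cc u w.1 ^ 2) := by
            rw [Real.norm_eq_abs, ← Real.sqrt_sq_eq_abs]
            congr 1
            linarith
          rw [habs]
        · have hg : Continuous fun w : ℝ × ℝ × ℝ => Real.sqrt (1 - cc u w.1 ^ 2) := by
            apply Real.continuous_sqrt.comp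
            fun_prop
          have hg0 : Real.sqrt (1 - cc u w₀.1 ^ 2) = 0 := by
            rw [hx, hccbb]; norm_num
          have h2 : Filter.Tendsto (fun w : ℝ × ℝ × ℝ => Real.sqrt (1 - cc u w.1 ^ 2))
              (nhdsWithin w₀ E) (nhds (Real.sqrt (1 - cc u w₀.1 ^ 2))) :=
            (hg.tendsto w₀).mono_left nhdsWithin_le_nhds
          rwa [hg0] at h2
      -- interior: plain continuity
      · apply ContinuousAt.continuousWithinAt
        apply ContinuousAt.mul
        · exact (continuous_snd.fst).continuousAt
        · apply ContinuousAt.comp (Real.continuous_sqrt.continuousAt)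
          apply ContinuousAt.div
          · fun_prop
          · exact ((hcont_h hu).comp continuous_fst).continuousAt
          · exact (hinter _ h1 h2).ne'
  have hΦcont : Continuous fun w : ↥E => (cc u w.1.1, w.1.2.1 * kk u w.1.1) := by
    have := hFcont.restrict
    exact this
  have heqvcont : Continuous ⇑eqv := by
    apply Continuous.subtype_mk hΦcont
  exact ⟨Continuous.homeoOfEquivCompactToT2 (f := eqv) heqvcont⟩

end Claim3

/-- From the proof of Claim 3 of Section 5: for `0 < u ≤ 1`, the map `q_u` is a proper
surjective submersion on `X_u`, and its fiber `q_u⁻¹(0)` is homeomorphic to `S¹`. -/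

theorem qu_proper_surjective_submersion_circle_fiber :
    ∀ u : ℝ, 0 < u → u ≤ 1 →
      (Continuous (qu u) ∧ ∀ K : Set ℝ, IsCompact K → IsCompact (qu u ⁻¹' K)) ∧
      Function.Surjective (qu u) ∧
      (∀ w ∈ Xu u, Function.Surjective (fderiv ℝ (Ψu u) w)) ∧
      Nonempty (↥{w : ℝ × ℝ × ℝ | w ∈ Xu u ∧ w.2.2 = 0} ≃ₜ ↥circleS) := by
  intro u hu hu1
  exact ⟨Claim3.part_a hu hu1, Claim3.part_b, Claim3.part_c hu hu1, Claim3.part_d hu hu1⟩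
end
end
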